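/- arXiv:1910.06257 — 10 statements merged into one kernel-verified Lean document; each statement's English description precedes it below -/
import Mathlib

section
/- For every ε > 0, the series ∑_{n=1}^∞ 1/(rad(n) · n^ε) converges, where rad(n) = ∏_{p ∣ n} p is the radical of n (the product of the distinct prime divisors of n, with rad(1) = 1). -/
/-- The radical of a positive integer: the product of its distinct prime divisors
(with `rad 1 = 1`). -/
def rad (n : ℕ) : ℕ := ∏ p ∈ n.primeFactors, p

lemma rad_pos (n : ℕ) : 0 < rad n :=
  Finset.prod_pos fun p hp => (Nat.prime_of_mem_primeFactors hp).pos

lemma rad_one : rad 1 = 1 := by simp [rad]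

lemma rad_prime_pow {p : ℕ} (hp : p.Prime) (e : ℕ) : rad (p ^ (e + 1)) = p := by
  unfold rad
  rw [Nat.primeFactors_pow _ (Nat.succ_ne_zero e), hp.primeFactors]
  simp

lemma pow_rpow_comm (x : ℝ) (hx : 0 ≤ x) (n : ℕ) (y : ℝ) :
    (x ^ n) ^ y = (x ^ y) ^ n := by
  rw [← Real.rpow_natCast x n, ← Real.rpow_mul hx, mul_comm, Real.rpow_mul hx,
    Real.rpow_natCast]

/-- For every `ε > 0`, the series `∑_{n=1}^∞ 1/(rad(n) · n^ε)` converges. -/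
theorem stmt_4 (ε : ℝ) (hε : 0 < ε) :
    Summable (fun n : ℕ => 1 / ((rad (n + 1) : ℝ) * ((n + 1 : ℕ) : ℝ) ^ ε)) := by
  classical
  set f : ℕ → ℝ := fun n => if n = 0 then 0 else 1 / ((rad n : ℝ) * (n : ℝ) ^ ε) with hfdef
  have hfpos : ∀ n, 0 ≤ f n := by
    intro n
    by_cases h : n = 0
    · simp [f, h]
    · have h1 : (0:ℝ) < (rad n : ℝ) := by exact_mod_cast rad_pos n
      have h2 : (0:ℝ) < (n : ℝ) ^ ε :=
        Real.rpow_pos_of_pos (by exact_mod_cast Nat.pos_of_ne_zero h) ε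
      simp only [f, if_neg h]
      positivity
  have hf1 : f 1 = 1 := by simp [f, rad_one]
  have hmul : ∀ {m n : ℕ}, Nat.Coprime m n → f (m * n) = f m * f n := by
    intro m n hmn
    rcases eq_or_ne m 0 with rfl | hm
    · have : n = 1 := by simpa using hmn
      subst this; simp [f]
    rcases eq_or_ne n 0 with rfl | hn
    · have : m = 1 := by simpa [Nat.coprime_zero_right] using hmn
      subst this; simp [f]
    · have hrad : rad (m * n) = rad m * rad n := by
        unfold rad
        rw [Nat.primeFactors_mul hm hn, Finset.prod_union hmn.disjoint_primeFactors]
      have hpow : ((m * n : ℕ) : ℝ) ^ ε = (m : ℝ) ^ ε * (n : ℝ) ^ ε := by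
        push_cast
        exact Real.mul_rpow (Nat.cast_nonneg m) (Nat.cast_nonneg n)
      simp only [f, if_neg (Nat.mul_ne_zero hm hn), if_neg hm, if_neg hn, hrad, hpow]
      push_cast
      rw [one_div, one_div, one_div, mul_mul_mul_comm, mul_inv]
  -- value at prime powers
  have hval : ∀ {p : ℕ}, p.Prime → ∀ e : ℕ,
      f (p ^ (e + 1)) = (p : ℝ)⁻¹ * ((p : ℝ) ^ (-ε)) ^ (e + 1) := by
    intro p hp e
    have hpne : p ^ (e + 1) ≠ 0 := pow_ne_zero _ hp.pos.ne'
    have hp0 : (0:ℝ) < (p : ℝ) := by exact_mod_cast hp.pos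
    simp only [f, if_neg hpne, rad_prime_pow hp]
    push_cast
    rw [pow_rpow_comm _ hp0.le, Real.rpow_neg hp0.le, inv_pow, one_div, mul_inv]
  have hr : ∀ {p : ℕ}, p.Prime → (0:ℝ) ≤ (p : ℝ) ^ (-ε) ∧ (p : ℝ) ^ (-ε) ≤ (2:ℝ) ^ (-ε) := by
    intro p hp
    have hp0 : (0:ℝ) < (p : ℝ) := by exact_mod_cast hp.pos
    have hp2 : (2:ℝ) ≤ (p : ℝ) := by exact_mod_cast hp.two_le
    constructor
    · exact (Real.rpow_pos_of_pos hp0 _).le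
    · rw [Real.rpow_neg hp0.le, Real.rpow_neg (by norm_num : (0:ℝ) ≤ 2)]
      exact inv_anti₀ (Real.rpow_pos_of_pos (by norm_num) _)
        (Real.rpow_le_rpow (by norm_num) hp2 hε.le)
  have hs1 : (2:ℝ) ^ (-ε) < 1 :=
    Real.rpow_lt_one_of_one_lt_of_neg (by norm_num) (by linarith)
  -- summability at prime powers
  have hsum : ∀ {p : ℕ}, p.Prime → Summable (fun e : ℕ => ‖f (p ^ e)‖) := by
    intro p hp
    obtain ⟨hr0, hr2⟩ := hr hp
    have hrlt : (p : ℝ) ^ (-ε) < 1 := lt_of_le_of_lt hr2 hs1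
    refine Summable.of_nonneg_of_le (fun e => norm_nonneg _)
      (fun e => ?_) (summable_geometric_of_lt_one hr0 hrlt)
    rw [Real.norm_of_nonneg (hfpos _)]
    cases e with
    | zero => simp [hf1]
    | succ e =>
        rw [hval hp e]
        have hp1 : (p : ℝ)⁻¹ ≤ 1 := by
          rw [inv_le_one_iff₀]; right; exact_mod_cast hp.one_le
        exact mul_le_of_le_one_left (pow_nonneg hr0 _) hp1
  -- constants
  set C : ℝ := (1 - (2:ℝ) ^ (-ε))⁻¹ with hCdef
  have hC0 : 0 < C := inv_pos.mpr (by linarith)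
  set g : ℕ → ℝ := fun n => (n : ℝ)⁻¹ * (n : ℝ) ^ (-ε) with hgdef
  have hg0 : ∀ n, 0 ≤ g n := fun n => by positivity
  have hgsum : Summable g := by
    have h := Real.summable_nat_rpow (p := -(1 + ε)) |>.mpr (by linarith)
    refine h.congr fun n => ?_
    rcases eq_or_ne n 0 with rfl | hn
    · rw [Nat.cast_zero, Real.zero_rpow (by linarith : -(1+ε) ≠ 0)]
      simp [g]
    · have hn0 : (0:ℝ) < (n:ℝ) := by exact_mod_cast Nat.pos_of_ne_zero hn
      rw [show -(1+ε) = -1 + -ε by ring, Real.rpow_add hn0, Real.rpow_neg_one]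
  set T : ℝ := ∑' n, g n with hTdef
  -- bound on local factors
  have hfac : ∀ {p : ℕ}, p.Prime → ∑' e : ℕ, f (p ^ e) ≤ 1 + C * g p := by
    intro p hp
    obtain ⟨hr0, hr2⟩ := hr hp
    have hrlt : (p : ℝ) ^ (-ε) < 1 := lt_of_le_of_lt hr2 hs1
    have hS : Summable (fun e : ℕ => f (p ^ e)) := (hsum hp).of_norm
    rw [Summable.tsum_eq_zero_add hS]
    simp only [pow_zero, hf1]
    gcongr
    have : ∀ e : ℕ, f (p ^ (e + 1)) = ((p:ℝ)⁻¹ * (p:ℝ) ^ (-ε)) * ((p:ℝ) ^ (-ε)) ^ e := by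
      intro e; rw [hval hp e, pow_succ]; ring
    rw [tsum_congr this, tsum_mul_left, tsum_geometric_of_lt_one hr0 hrlt]
    rw [show (p:ℝ)⁻¹ * (p:ℝ) ^ (-ε) = g p from rfl]
    rw [mul_comm (C) (g p)]
    refine mul_le_mul_of_nonneg_left ?_ (hg0 p)
    rw [hCdef]
    exact inv_anti₀ (by linarith) (by linarith)
  -- uniform bound on partial sums
  have key : Summable f := by
    refine summable_of_sum_range_le hfpos (c := Real.exp (C * T)) fun n => ?_
    have hEP := EulerProduct.summable_and_hasSum_smoothNumbers_prod_primesBelow_tsum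
      hf1 hmul hsum n
    have hsub : Summable (fun m : n.smoothNumbers => f m) := by
      refine hEP.1.congr fun m => Real.norm_of_nonneg (hfpos _)
    have htsub : ∑' m : n.smoothNumbers, f m
        = ∏ p ∈ n.primesBelow, ∑' e : ℕ, f (p ^ e) := hEP.2.tsum_eq
    have step1 : ∑ i ∈ Finset.range n, f i
        ≤ ∑' m : n.smoothNumbers, f m := by
      have hfil : ∑ i ∈ (Finset.range n).filter (· ∈ n.smoothNumbers), f i
          = ∑ i ∈ Finset.range n, f i := by
        refine Finset.sum_filter_of_ne fun x hx hfx => ?_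
        have hx0 : x ≠ 0 := by rintro rfl; exact hfx (if_pos rfl)
        refine Nat.mem_smoothNumbers.mpr ⟨hx0, fun p hp => ?_⟩
        have := Nat.le_of_mem_primeFactorsList hp
        exact lt_of_le_of_lt this (Finset.mem_range.mp hx)
      rw [← hfil, ← Finset.sum_subtype_eq_sum_filter]
      exact Summable.sum_le_tsum _ (fun _ _ => hfpos _) hsub
    have step2 : ∏ p ∈ n.primesBelow, ∑' e : ℕ, f (p ^ e) ≤ Real.exp (C * T) := by
      calc ∏ p ∈ n.primesBelow, ∑' e : ℕ, f (p ^ e)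
          ≤ ∏ p ∈ n.primesBelow, Real.exp (C * g p) := by
            refine Finset.prod_le_prod (fun p hp => tsum_nonneg fun e => hfpos _)
              fun p hp => ?_
            refine le_trans (hfac (Nat.prime_of_mem_primesBelow hp)) ?_
            have := Real.add_one_le_exp (C * g p)
            linarith
        _ = Real.exp (∑ p ∈ n.primesBelow, C * g p) := (Real.exp_sum _ _).symm
        _ ≤ Real.exp (C * T) := by
            rw [Real.exp_le_exp, ← Finset.mul_sum]
            exact mul_le_mul_of_nonneg_left
              (Summable.sum_le_tsum _ (fun i _ => hg0 i) hgsum) hC0.le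
    calc ∑ i ∈ Finset.range n, f i ≤ ∑' m : n.smoothNumbers, f m := step1
      _ = ∏ p ∈ n.primesBelow, ∑' e : ℕ, f (p ^ e) := htsub
      _ ≤ Real.exp (C * T) := step2
  have := (summable_nat_add_iff 1).mpr key
  refine this.congr fun n => ?_
  simp only [f, if_neg (Nat.succ_ne_zero n)]
end

section
/- Let a₁, a₂ > 0 be real numbers with a₁ + a₂ > 1. Then the sum ∑ 1/(n₁^{a₁} · n₂^{a₂}), taken over all pairs of positive integers (n₁, n₂) with rad(n₁) = rad(n₂), converges (i.e. the family indexed by such pairs is summable). -/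
open Nat Filter

namespace Stmt5Aux

/-- `n ↦ (n : ℝ) ^ (-a)` as a monoid hom. -/
noncomputable def rpowHom (a : ℝ) : ℕ →* ℝ where
  toFun n := (n : ℝ) ^ (-a)
  map_one' := by simp
  map_mul' m n := by
    push_cast
    exact Real.mul_rpow (Nat.cast_nonneg m) (Nat.cast_nonneg n)

lemma rpowHom_apply (a : ℝ) (n : ℕ) : rpowHom a n = (n : ℝ) ^ (-a) := rfl

lemma norm_rpowHom_lt_one {a : ℝ} (ha : 0 < a) {p : ℕ} (hp : p.Prime) :
    ‖rpowHom a p‖ < 1 := by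
  have h1 : (1 : ℝ) < p := by exact_mod_cast hp.one_lt
  rw [rpowHom_apply, Real.norm_eq_abs,
    abs_of_nonneg (Real.rpow_nonneg (by positivity) _)]
  exact Real.rpow_lt_one_of_one_lt_of_neg h1 (by linarith)

lemma smooth_summable {a : ℝ} (ha : 0 < a) (s : Finset ℕ) :
    Summable (fun m : Nat.factoredNumbers s => ((m : ℕ) : ℝ) ^ (-a)) :=
  ⟨_, (EulerProduct.summable_and_hasSum_factoredNumbers_prod_filter_prime_geometric
    (f := rpowHom a) (fun hp => norm_rpowHom_lt_one ha hp) s).2⟩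

lemma smooth_hasSum {a : ℝ} (ha : 0 < a) (s : Finset ℕ) :
    HasSum (fun m : Nat.factoredNumbers s => ((m : ℕ) : ℝ) ^ (-a))
      (∏ p ∈ s.filter Nat.Prime, (1 - (p : ℝ) ^ (-a))⁻¹) :=
  (EulerProduct.summable_and_hasSum_factoredNumbers_prod_filter_prime_geometric
    (f := rpowHom a) (fun hp => norm_rpowHom_lt_one ha hp) s).2

lemma one_sub_pos {a : ℝ} (ha : 0 < a) {p : ℕ} (hp : p.Prime) :
    0 < 1 - (p : ℝ) ^ (-a) := by
  have h1 : (1 : ℝ) < p := by exact_mod_cast hp.one_lt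
  have := Real.rpow_lt_one_of_one_lt_of_neg h1 (by linarith : -a < 0)
  linarith

lemma one_le_inv_one_sub {a : ℝ} (ha : 0 < a) {p : ℕ} (hp : p.Prime) :
    1 ≤ (1 - (p : ℝ) ^ (-a))⁻¹ := by
  rw [one_le_inv_iff₀]
  refine ⟨one_sub_pos ha hp, ?_⟩
  have : (0:ℝ) ≤ (p : ℝ) ^ (-a) := Real.rpow_nonneg (by positivity) _
  linarith

/-- The key bound: the sum of `m ^ (-a)` over `d`-smooth numbers is `≤ K * d ^ δ`. -/
lemma smooth_bound {a : ℝ} (ha : 0 < a) {δ : ℝ} (hδ : 0 < δ) :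
    ∃ K : ℝ, 0 ≤ K ∧ ∀ d : ℕ, d ≠ 0 →
      (∑' m : Nat.factoredNumbers d.primeFactors, ((m : ℕ) : ℝ) ^ (-a)) ≤ K * (d : ℝ) ^ δ := by
  have hev1 : ∀ᶠ n : ℕ in atTop, ((n : ℝ)) ^ (-a) < 1/2 :=
    ((tendsto_rpow_neg_atTop ha).comp tendsto_natCast_atTop_atTop).eventually_lt_const
      (by norm_num)
  have hev2 : ∀ᶠ n : ℕ in atTop, (2 : ℝ) ≤ (n : ℝ) ^ δ :=
    ((tendsto_rpow_atTop hδ).comp tendsto_natCast_atTop_atTop).eventually_ge_atTop 2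
  obtain ⟨N₀, hN₀⟩ := eventually_atTop.mp (hev1.and hev2)
  set bad : Finset ℕ := (Finset.range N₀).filter Nat.Prime with hbad
  set B : ℕ → ℝ := fun p => if p ∈ bad then (1 - (p : ℝ) ^ (-a))⁻¹ else 1 with hB
  have hBprime : ∀ p : ℕ, p.Prime → 1 ≤ B p := by
    intro p hp
    simp only [hB]
    split
    · exact one_le_inv_one_sub ha hp
    · exact le_refl 1
  refine ⟨∏ p ∈ bad, (1 - (p : ℝ) ^ (-a))⁻¹, ?_, ?_⟩
  · refine Finset.prod_nonneg fun p hp => ?_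
    have hp' : p.Prime := (Finset.mem_filter.mp hp).2
    exact le_trans zero_le_one (one_le_inv_one_sub ha hp')
  intro d hd
  have hprimes : ∀ p ∈ d.primeFactors, Nat.Prime p := fun p hp =>
    Nat.prime_of_mem_primeFactors hp
  have htsum : (∑' m : Nat.factoredNumbers d.primeFactors, ((m : ℕ) : ℝ) ^ (-a))
      = ∏ p ∈ d.primeFactors, (1 - (p : ℝ) ^ (-a))⁻¹ := by
    rw [(smooth_hasSum ha d.primeFactors).tsum_eq, Finset.filter_true_of_mem hprimes]
  rw [htsum]
  -- each factor bounded by `B p * p ^ δ`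
  have hstep : ∀ p ∈ d.primeFactors, (1 - (p : ℝ) ^ (-a))⁻¹ ≤ B p * (p : ℝ) ^ δ := by
    intro p hp
    have hpp := hprimes p hp
    have hp1 : (1 : ℝ) ≤ p := by exact_mod_cast hpp.one_le
    have hpδ : (1 : ℝ) ≤ (p : ℝ) ^ δ := by
      calc (1:ℝ) = (1:ℝ) ^ δ := (Real.one_rpow δ).symm
      _ ≤ (p : ℝ) ^ δ := Real.rpow_le_rpow zero_le_one hp1 hδ.le
    by_cases hmem : p ∈ bad
    · simp only [hB, if_pos hmem]
      exact le_mul_of_one_le_right (le_trans zero_le_one (one_le_inv_one_sub ha hpp)) hpδ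
    · have hN : N₀ ≤ p := by
        by_contra hlt
        exact hmem (Finset.mem_filter.mpr ⟨Finset.mem_range.mpr (lt_of_not_ge hlt), hpp⟩)
      obtain ⟨h1, h2⟩ := hN₀ p hN
      simp only [hB, if_neg hmem, one_mul]
      calc (1 - (p : ℝ) ^ (-a))⁻¹ ≤ ((1:ℝ)/2)⁻¹ := by
            apply inv_anti₀ (by norm_num)
            linarith
      _ = 2 := by norm_num
      _ ≤ (p : ℝ) ^ δ := h2
  calc ∏ p ∈ d.primeFactors, (1 - (p : ℝ) ^ (-a))⁻¹
      ≤ ∏ p ∈ d.primeFactors, (B p * (p : ℝ) ^ δ) := by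
        refine Finset.prod_le_prod (fun p hp => ?_) hstep
        exact le_trans zero_le_one (one_le_inv_one_sub ha (hprimes p hp))
    _ = (∏ p ∈ d.primeFactors, B p) * ∏ p ∈ d.primeFactors, (p : ℝ) ^ δ :=
        Finset.prod_mul_distrib
    _ ≤ (∏ p ∈ bad, (1 - (p : ℝ) ^ (-a))⁻¹) * (d : ℝ) ^ δ := by
        have h1 : (∏ p ∈ d.primeFactors, B p) ≤ ∏ p ∈ bad, (1 - (p : ℝ) ^ (-a))⁻¹ := by
          have e1 : (∏ p ∈ d.primeFactors ∩ bad, B p) = ∏ p ∈ d.primeFactors, B p := by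
            refine Finset.prod_subset (Finset.inter_subset_left) (fun p hp hnp => ?_)
            have : p ∉ bad := fun hc => hnp (Finset.mem_inter.mpr ⟨hp, hc⟩)
            simp only [hB, if_neg this]
          have e2 : (∏ p ∈ bad, B p) = ∏ p ∈ bad, (1 - (p : ℝ) ^ (-a))⁻¹ :=
            Finset.prod_congr rfl (fun p hp => by simp only [hB, if_pos hp])
          rw [← e1, ← e2]
          have hsub : d.primeFactors ∩ bad ⊆ bad := Finset.inter_subset_right
          rw [← Finset.prod_sdiff hsub]
          have hone : (1 : ℝ) ≤ ∏ p ∈ bad \ (d.primeFactors ∩ bad), B p := by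
            rw [← Finset.prod_const_one (s := bad \ (d.primeFactors ∩ bad))]
            refine Finset.prod_le_prod (fun p _ => zero_le_one) (fun p hp => ?_)
            exact hBprime p (Finset.mem_filter.mp (Finset.mem_sdiff.mp hp).1).2
          refine le_mul_of_one_le_left ?_ hone
          refine Finset.prod_nonneg fun p hp => ?_
          exact le_trans zero_le_one
            (hBprime p (Finset.mem_filter.mp (Finset.mem_inter.mp hp).2).2)
        have h2 : (∏ p ∈ d.primeFactors, (p : ℝ) ^ δ) ≤ (d : ℝ) ^ δ := by
          have e3 : (∏ p ∈ d.primeFactors, (p : ℝ) ^ δ)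
              = ((∏ p ∈ d.primeFactors, p : ℕ) : ℝ) ^ δ := by
            rw [Real.finset_prod_rpow _ _ (fun p _ => by positivity) δ]
            push_cast
            rfl
          rw [e3]
          refine Real.rpow_le_rpow (by positivity) ?_ hδ.le
          exact_mod_cast Nat.le_of_dvd (Nat.pos_of_ne_zero hd) (Nat.prod_primeFactors_dvd d)
        refine mul_le_mul h1 h2 (Finset.prod_nonneg fun p _ => by positivity) ?_
        refine Finset.prod_nonneg fun p hp => ?_
        exact le_trans zero_le_one (one_le_inv_one_sub ha (Finset.mem_filter.mp hp).2)

lemma rad_dvd (n : ℕ) : rad n ∣ n := Nat.prod_primeFactors_dvd n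

lemma rad_ne_zero {n : ℕ} (hn : n ≠ 0) : rad n ≠ 0 :=
  fun hc => hn (zero_dvd_iff.mp (hc ▸ rad_dvd n))

lemma primeFactors_rad (n : ℕ) : (rad n).primeFactors = n.primeFactors :=
  Nat.primeFactors_prod (fun _ hp => Nat.prime_of_mem_primeFactors hp)

lemma div_rad_mem {n : ℕ} (hn : n ≠ 0) :
    n / rad n ∈ Nat.factoredNumbers ((rad n).primeFactors) := by
  rw [Nat.mem_factoredNumbers_iff_primeFactors_subset]
  constructor
  · have h1 : rad n ≤ n := Nat.le_of_dvd (Nat.pos_of_ne_zero hn) (rad_dvd n)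
    have h2 : 0 < n / rad n :=
      Nat.div_pos h1 (Nat.pos_of_ne_zero (rad_ne_zero hn))
    exact h2.ne'
  · rw [primeFactors_rad]
    exact Nat.primeFactors_mono (Nat.div_dvd_of_dvd (rad_dvd n)) hn

end Stmt5Aux

set_option maxHeartbeats 1000000 in
/-- If `a₁, a₂ > 0` and `a₁ + a₂ > 1`, then the family
`1/(n₁^{a₁} n₂^{a₂})`, indexed by pairs of positive integers with
`rad n₁ = rad n₂`, is summable. -/
theorem stmt_5 (a₁ a₂ : ℝ) (h₁ : 0 < a₁) (h₂ : 0 < a₂) (h : 1 < a₁ + a₂) :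
    Summable (fun x : {q : ℕ × ℕ // 0 < q.1 ∧ 0 < q.2 ∧ rad q.1 = rad q.2} =>
      1 / ((x.val.1 : ℝ) ^ a₁ * (x.val.2 : ℝ) ^ a₂)) := by
  have hδpos : 0 < (a₁ + a₂ - 1)/4 := by linarith
  set δ : ℝ := (a₁ + a₂ - 1)/4 with hδ
  obtain ⟨K₁, hK₁, hbd₁⟩ := Stmt5Aux.smooth_bound h₁ hδpos
  obtain ⟨K₂, hK₂, hbd₂⟩ := Stmt5Aux.smooth_bound h₂ hδpos
  set g : (Σ d : ℕ,
      (Nat.factoredNumbers d.primeFactors × Nat.factoredNumbers d.primeFactors)) → ℝ :=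
    fun z => (z.1 : ℝ) ^ (-(a₁ + a₂)) *
      (((z.2.1 : ℕ) : ℝ) ^ (-a₁) * ((z.2.2 : ℕ) : ℝ) ^ (-a₂)) with hg
  have hgnn : ∀ z, 0 ≤ g z := fun z =>
    mul_nonneg (Real.rpow_nonneg (Nat.cast_nonneg _) _)
      (mul_nonneg (Real.rpow_nonneg (Nat.cast_nonneg _) _)
        (Real.rpow_nonneg (Nat.cast_nonneg _) _))
  have hprodsum : ∀ d : ℕ, Summable (fun y :
      (Nat.factoredNumbers d.primeFactors × Nat.factoredNumbers d.primeFactors) =>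
      ((y.1 : ℕ) : ℝ) ^ (-a₁) * ((y.2 : ℕ) : ℝ) ^ (-a₂)) := fun d =>
    (Stmt5Aux.smooth_summable h₁ d.primeFactors).mul_of_nonneg
      (Stmt5Aux.smooth_summable h₂ d.primeFactors)
      (fun m => Real.rpow_nonneg (Nat.cast_nonneg _) _)
      (fun m => Real.rpow_nonneg (Nat.cast_nonneg _) _)
  have hfibeq : ∀ d : ℕ, (fun y : (Nat.factoredNumbers d.primeFactors ×
        Nat.factoredNumbers d.primeFactors) => g ⟨d, y⟩)
        = fun y => (d : ℝ) ^ (-(a₁ + a₂)) *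
          (((y.1 : ℕ) : ℝ) ^ (-a₁) * ((y.2 : ℕ) : ℝ) ^ (-a₂)) := by
    intro d
    funext y
    rw [hg]
  have hfib : ∀ d : ℕ, Summable (fun y :
      (Nat.factoredNumbers d.primeFactors × Nat.factoredNumbers d.primeFactors) =>
      g ⟨d, y⟩) := by
    intro d
    rw [hfibeq d]
    exact (hprodsum d).mul_left _
  have hgsum : Summable g := by
    refine (summable_sigma_of_nonneg hgnn).mpr ⟨hfib, ?_⟩
    have hmaj : Summable (fun d : ℕ => (K₁ * K₂) * (d : ℝ) ^ (2*δ - (a₁+a₂))) :=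
      (Real.summable_nat_rpow.mpr (by rw [hδ]; linarith)).mul_left _
    refine Summable.of_nonneg_of_le (fun d => tsum_nonneg (fun y => hgnn _))
      (fun d => ?_) hmaj
    by_cases hd : d = 0
    · subst hd
      have hz : ∀ y : (Nat.factoredNumbers (Nat.primeFactors 0) ×
          Nat.factoredNumbers (Nat.primeFactors 0)),
          g ⟨0, y⟩ = 0 := by
        intro y
        simp only [hg, Nat.cast_zero]
        rw [Real.zero_rpow (by linarith : -(a₁+a₂) ≠ 0), zero_mul]
      rw [tsum_congr hz, tsum_zero]
      positivity
    · have hd0 : (0:ℝ) < d := by exact_mod_cast Nat.pos_of_ne_zero hd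
      have hS₁ := hbd₁ d hd
      have hS₂ := hbd₂ d hd
      have hSum₁ := Stmt5Aux.smooth_summable h₁ d.primeFactors
      have hSum₂ := Stmt5Aux.smooth_summable h₂ d.primeFactors
      have e0 : ∀ y : (Nat.factoredNumbers d.primeFactors ×
          Nat.factoredNumbers d.primeFactors),
          g ⟨d, y⟩ = (d : ℝ) ^ (-(a₁ + a₂)) *
            (((y.1 : ℕ) : ℝ) ^ (-a₁) * ((y.2 : ℕ) : ℝ) ^ (-a₂)) := fun y =>
        congrFun (hfibeq d) y
      rw [tsum_congr e0, tsum_mul_left,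
        ← Summable.tsum_mul_tsum hSum₁ hSum₂ (hprodsum d)]
      have hnn₁ : 0 ≤ ∑' m : Nat.factoredNumbers d.primeFactors, ((m : ℕ) : ℝ) ^ (-a₁) :=
        tsum_nonneg fun m => Real.rpow_nonneg (Nat.cast_nonneg _) _
      have hnn₂ : 0 ≤ ∑' m : Nat.factoredNumbers d.primeFactors, ((m : ℕ) : ℝ) ^ (-a₂) :=
        tsum_nonneg fun m => Real.rpow_nonneg (Nat.cast_nonneg _) _
      have hexp : (d:ℝ) ^ (2*δ - (a₁+a₂))
          = (d:ℝ) ^ (-(a₁+a₂)) * ((d:ℝ) ^ δ * (d:ℝ) ^ δ) := by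
        rw [show 2*δ - (a₁+a₂) = -(a₁+a₂) + (δ + δ) by ring, Real.rpow_add hd0,
          Real.rpow_add hd0]
      calc (d : ℝ) ^ (-(a₁ + a₂)) *
            ((∑' m : Nat.factoredNumbers d.primeFactors, ((m : ℕ) : ℝ) ^ (-a₁)) *
             (∑' m : Nat.factoredNumbers d.primeFactors, ((m : ℕ) : ℝ) ^ (-a₂)))
          ≤ (d : ℝ) ^ (-(a₁ + a₂)) * ((K₁ * (d:ℝ)^δ) * (K₂ * (d:ℝ)^δ)) := by
            refine mul_le_mul_of_nonneg_left ?_ (Real.rpow_nonneg hd0.le _)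
            exact mul_le_mul hS₁ hS₂ hnn₂ (by positivity)
        _ = (K₁ * K₂) * (d : ℝ) ^ (2*δ - (a₁+a₂)) := by rw [hexp]; ring
  -- the injection
  set T := {q : ℕ × ℕ // 0 < q.1 ∧ 0 < q.2 ∧ rad q.1 = rad q.2} with hT
  have hmem1 : ∀ x : T, (x.val.1 / rad x.val.1) ∈
      Nat.factoredNumbers ((rad x.val.1).primeFactors) := fun x =>
    Stmt5Aux.div_rad_mem x.2.1.ne'
  have hmem2 : ∀ x : T, (x.val.2 / rad x.val.1) ∈
      Nat.factoredNumbers ((rad x.val.1).primeFactors) := by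
    intro x
    rw [x.2.2.2]
    exact Stmt5Aux.div_rad_mem x.2.2.1.ne'
  set Φ : T → (Σ d : ℕ,
      (Nat.factoredNumbers d.primeFactors × Nat.factoredNumbers d.primeFactors)) :=
    fun x => ⟨rad x.val.1, (⟨x.val.1 / rad x.val.1, hmem1 x⟩,
      ⟨x.val.2 / rad x.val.1, hmem2 x⟩)⟩ with hΦ
  have hrec : ∀ x : T, rad x.val.1 * (x.val.1 / rad x.val.1) = x.val.1 ∧
      rad x.val.1 * (x.val.2 / rad x.val.1) = x.val.2 := by
    intro x
    refine ⟨Nat.mul_div_cancel' (Stmt5Aux.rad_dvd _), ?_⟩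
    rw [x.2.2.2]
    exact Nat.mul_div_cancel' (Stmt5Aux.rad_dvd _)
  have hinj : Function.Injective Φ := by
    intro x y hxy
    have hfst : rad x.val.1 = rad y.val.1 := congrArg Sigma.fst hxy
    have hsnd := congrArg (fun z : (Σ d : ℕ,
      (Nat.factoredNumbers d.primeFactors × Nat.factoredNumbers d.primeFactors)) =>
      (((z.2.1 : ℕ)), ((z.2.2 : ℕ)))) hxy
    have h21 : x.val.1 / rad x.val.1 = y.val.1 / rad y.val.1 :=
      (Prod.mk.injEq _ _ _ _).mp hsnd |>.1
    have h22 : x.val.2 / rad x.val.1 = y.val.2 / rad y.val.1 :=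
      (Prod.mk.injEq _ _ _ _).mp hsnd |>.2
    have e1 : x.val.1 = y.val.1 := by
      rw [← (hrec x).1, ← (hrec y).1, h21, hfst]
    have e2 : x.val.2 = y.val.2 := by
      rw [← (hrec x).2, ← (hrec y).2, h22, hfst]
    exact Subtype.ext (Prod.ext e1 e2)
  have hterm : ∀ x : T,
      1 / ((x.val.1 : ℝ) ^ a₁ * (x.val.2 : ℝ) ^ a₂) = g (Φ x) := by
    intro x
    have hd0 : (0:ℝ) < (rad x.val.1 : ℕ) := by
      exact_mod_cast Nat.pos_of_ne_zero (Stmt5Aux.rad_ne_zero x.2.1.ne')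
    have hn1 : ((x.val.1 : ℕ) : ℝ)
        = (rad x.val.1 : ℝ) * ((x.val.1 / rad x.val.1 : ℕ) : ℝ) := by
      exact_mod_cast congrArg (Nat.cast : ℕ → ℝ) (hrec x).1.symm
    have hn2 : ((x.val.2 : ℕ) : ℝ)
        = (rad x.val.1 : ℝ) * ((x.val.2 / rad x.val.1 : ℕ) : ℝ) := by
      exact_mod_cast congrArg (Nat.cast : ℕ → ℝ) (hrec x).2.symm
    have e1 : ((x.val.1 : ℕ) : ℝ) ^ a₁
        = (rad x.val.1 : ℝ) ^ a₁ * ((x.val.1 / rad x.val.1 : ℕ) : ℝ) ^ a₁ := by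
      rw [hn1, Real.mul_rpow hd0.le (Nat.cast_nonneg _)]
    have e2 : ((x.val.2 : ℕ) : ℝ) ^ a₂
        = (rad x.val.1 : ℝ) ^ a₂ * ((x.val.2 / rad x.val.1 : ℕ) : ℝ) ^ a₂ := by
      rw [hn2, Real.mul_rpow hd0.le (Nat.cast_nonneg _)]
    have e3 : (rad x.val.1 : ℝ) ^ (-(a₁+a₂))
        = ((rad x.val.1 : ℝ) ^ a₁)⁻¹ * ((rad x.val.1 : ℝ) ^ a₂)⁻¹ := by
      rw [Real.rpow_neg hd0.le, Real.rpow_add hd0, mul_inv]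
    have e4 : ((x.val.1 / rad x.val.1 : ℕ) : ℝ) ^ (-a₁)
        = (((x.val.1 / rad x.val.1 : ℕ) : ℝ) ^ a₁)⁻¹ :=
      Real.rpow_neg (Nat.cast_nonneg _) _
    have e5 : ((x.val.2 / rad x.val.1 : ℕ) : ℝ) ^ (-a₂)
        = (((x.val.2 / rad x.val.1 : ℕ) : ℝ) ^ a₂)⁻¹ :=
      Real.rpow_neg (Nat.cast_nonneg _) _
    have hgΦ : g (Φ x) = (rad x.val.1 : ℝ) ^ (-(a₁+a₂)) *
          (((x.val.1 / rad x.val.1 : ℕ) : ℝ) ^ (-a₁) *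
           ((x.val.2 / rad x.val.1 : ℕ) : ℝ) ^ (-a₂)) := by
      rw [hΦ, hg]
    rw [hgΦ, e1, e2, e3, e4, e5, one_div, mul_inv, mul_inv, mul_inv]
    ring
  have hcomp : Summable (g ∘ Φ) := hgsum.comp_injective hinj
  refine Summable.of_nonneg_of_le (fun x => by positivity)
    (fun x => le_of_eq (hterm x)) hcomp
end

section
/- Let k be a field of characteristic not equal to 3, and let L = k(μ₃) be the field obtained by adjoining a primitive cube root of unity to k (so L = k if μ₃ ⊂ k, and [L:k] = 2 otherwise). Let α ∈ L with α ∉ {0, 1, −1}, and if μ₃ ⊄ k assume that Norm_{L/k}(α) = 1. Then α + α⁻¹ lies in (the image of) k, and there is an isomorphism of L-algebras L[u]/(u³ − α) ≅ (k[t]/(t³ − 3t − (α + α⁻¹))) ⊗_k L. Explicitly, the maps u ↦ (−α/(α² − 1))·(t² − αt − 2) and t ↦ u + u⁻¹ are mutually inverse L-algebra isomorphisms between L[u]/(u³ − α) and L[t]/(t³ − 3t − α − α⁻¹). -/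
open Polynomial


noncomputable def AdjoinRoot.liftHom {R S : Type*} [CommRing R] [CommRing S] [Algebra R S]
    (f : R[X]) (x : S) (hfx : aeval x f = 0) : AdjoinRoot f →ₐ[R] S :=
  AdjoinRoot.liftAlgHom f (Algebra.ofId R S) x hfx

@[simp]
theorem AdjoinRoot.liftHom_root {R S : Type*} [CommRing R] [CommRing S] [Algebra R S]
    (f : R[X]) (x : S) (hfx : aeval x f = 0) : AdjoinRoot.liftHom f x hfx (AdjoinRoot.root f) = x :=
  AdjoinRoot.liftAlgHom_root f _ x hfx


noncomputable def tensorAdjoinRootEquiv (k L : Type*) [Field k] [Field L] [Algebra k L]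
    (q : k[X]) :
    TensorProduct k L (AdjoinRoot q) ≃ₐ[L] AdjoinRoot (q.map (algebraMap k L)) := by
  let gk : AdjoinRoot q →ₐ[k] AdjoinRoot (q.map (algebraMap k L)) :=
    AdjoinRoot.liftHom q (AdjoinRoot.root (q.map (algebraMap k L))) (by
      rw [← Polynomial.aeval_map_algebraMap L, AdjoinRoot.aeval_eq, AdjoinRoot.mk_self])
  let fwd : TensorProduct k L (AdjoinRoot q) →ₐ[L] AdjoinRoot (q.map (algebraMap k L)) :=
    Algebra.TensorProduct.lift (Algebra.ofId L _) gk (fun x y => Commute.all _ _)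
  let bwd : AdjoinRoot (q.map (algebraMap k L)) →ₐ[L] TensorProduct k L (AdjoinRoot q) :=
    AdjoinRoot.liftHom _ ((1 : L) ⊗ₜ AdjoinRoot.root q) (by
      rw [Polynomial.aeval_map_algebraMap]
      have : (1 : L) ⊗ₜ AdjoinRoot.root q
          = (Algebra.TensorProduct.includeRight :
              AdjoinRoot q →ₐ[k] TensorProduct k L (AdjoinRoot q)) (AdjoinRoot.root q) := rfl
      rw [this, Polynomial.aeval_algHom_apply, AdjoinRoot.aeval_eq, AdjoinRoot.mk_self, map_zero])
  refine AlgEquiv.ofAlgHom fwd bwd ?_ ?_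
  · apply AdjoinRoot.algHom_ext
    simp [fwd, bwd, gk, Algebra.TensorProduct.lift_tmul, AdjoinRoot.liftHom_root]
  · apply Algebra.TensorProduct.ext
    · ext
    · apply AdjoinRoot.algHom_ext
      simp [fwd, bwd, gk, Algebra.TensorProduct.lift_tmul, AdjoinRoot.liftHom_root]


set_option maxHeartbeats 1000000 in
/-- Let `k` be a field with `char k ≠ 3` and `L = k(μ₃)`. Let `α ∈ L` with
`α ∉ {0, 1, −1}`, of norm `1` if `μ₃ ⊄ k`. Then `α + α⁻¹` comes from `k`, one has
`L[u]/(u³ − α) ≅ (k[t]/(t³ − 3t − (α + α⁻¹))) ⊗_k L` as `L`-algebras, and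
explicitly `u ↦ (−α/(α² − 1))·(t² − αt − 2)` and `t ↦ u + u⁻¹ (= u + α⁻¹u²)` are
mutually inverse `L`-algebra isomorphisms between `L[u]/(u³ − α)` and
`L[t]/(t³ − 3t − α − α⁻¹)`. -/
theorem stmt_7 (k L : Type*) [Field k] [Field L] [Algebra k L]
    (hchar : (3 : k) ≠ 0)
    (ζ : L) (hζ3 : ζ ^ 3 = 1) (hζ1 : ζ ≠ 1)
    (hgen : Algebra.adjoin k ({ζ} : Set L) = ⊤)
    (α : L) (h0 : α ≠ 0) (h1 : α ≠ 1) (hm1 : α ≠ -1)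
    (hnorm : (¬ ∃ ω : k, ω ^ 3 = 1 ∧ ω ≠ 1) → Algebra.norm k α = 1) :
    (∃ a : k, algebraMap k L a = α + α⁻¹) ∧
    (∀ a : k, algebraMap k L a = α + α⁻¹ →
      Nonempty (AdjoinRoot (X ^ 3 - C α : L[X]) ≃ₐ[L]
        TensorProduct k L
          (AdjoinRoot (X ^ 3 - C 3 * X - C a : k[X])))) ∧
    (∃ (F : AdjoinRoot (X ^ 3 - C α : L[X]) →ₐ[L]
          AdjoinRoot (X ^ 3 - C 3 * X - C (α + α⁻¹) : L[X]))
       (G : AdjoinRoot (X ^ 3 - C 3 * X - C (α + α⁻¹) : L[X]) →ₐ[L]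
          AdjoinRoot (X ^ 3 - C α : L[X])),
      F (AdjoinRoot.root (X ^ 3 - C α : L[X])) =
        (-α / (α ^ 2 - 1)) •
          ((AdjoinRoot.root (X ^ 3 - C 3 * X - C (α + α⁻¹) : L[X])) ^ 2
            - α • AdjoinRoot.root (X ^ 3 - C 3 * X - C (α + α⁻¹) : L[X]) - 2) ∧
      G (AdjoinRoot.root (X ^ 3 - C 3 * X - C (α + α⁻¹) : L[X])) =
        AdjoinRoot.root (X ^ 3 - C α : L[X])
          + α⁻¹ • (AdjoinRoot.root (X ^ 3 - C α : L[X])) ^ 2 ∧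
      F.comp G = AlgHom.id L _ ∧ G.comp F = AlgHom.id L _) := by
  have hφ : Function.Injective (algebraMap k L) := (algebraMap k L).injective
  have hα2 : α ^ 2 - 1 ≠ 0 := by
    have ha : α - 1 ≠ 0 := sub_ne_zero.mpr h1
    have hb : α + 1 ≠ 0 := by
      intro h; exact hm1 (by linear_combination h)
    intro h
    exact (mul_ne_zero ha hb) (by linear_combination h)
  have hζq : ζ ^ 2 + ζ + 1 = 0 := by
    have hz : ζ - 1 ≠ 0 := sub_ne_zero.mpr hζ1
    have : (ζ - 1) * (ζ ^ 2 + ζ + 1) = 0 := by linear_combination hζ3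
    rcases mul_eq_zero.mp this with h' | h'
    · exact absurd h' hz
    · exact h'
  -- Part 1: α + α⁻¹ comes from k
  have hpart1 : ∃ a : k, algebraMap k L a = α + α⁻¹ := by
    by_cases hex : ∃ ω : k, ω ^ 3 = 1 ∧ ω ≠ 1
    · -- μ₃ ⊂ k : algebraMap is surjective
      obtain ⟨ω, hω3, hω1⟩ := hex
      have hωq : ω ^ 2 + ω + 1 = 0 := by
        have hz : ω - 1 ≠ 0 := sub_ne_zero.mpr hω1
        have : (ω - 1) * (ω ^ 2 + ω + 1) = 0 := by linear_combination hω3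
        rcases mul_eq_zero.mp this with h' | h'
        · exact absurd h' hz
        · exact h'
      have hw1 : (algebraMap k L ω) ^ 2 + algebraMap k L ω + 1 = 0 := by
        have := congrArg (algebraMap k L) hωq
        simpa [map_add, map_pow, map_one] using this
      have hw3 : (algebraMap k L ω) ^ 3 = 1 := by
        have := congrArg (algebraMap k L) hω3
        simpa [map_pow, map_one] using this
      have hsplit : (ζ - algebraMap k L ω) * (ζ - (algebraMap k L ω) ^ 2) = 0 := by
        linear_combination hζq + (-ζ) * hw1 + hw3
      have hζmem : ζ ∈ (⊥ : Subalgebra k L) := by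
        rcases mul_eq_zero.mp hsplit with h' | h'
        · exact Algebra.mem_bot.mpr ⟨ω, (sub_eq_zero.mp h').symm⟩
        · refine Algebra.mem_bot.mpr ⟨ω ^ 2, ?_⟩
          rw [map_pow]
          exact (sub_eq_zero.mp h').symm
      have htop : (⊤ : Subalgebra k L) ≤ ⊥ := by
        rw [← hgen]
        exact Algebra.adjoin_le (Set.singleton_subset_iff.mpr hζmem)
      obtain ⟨a, ha⟩ := Algebra.mem_bot.mp (htop (show α + α⁻¹ ∈ ⊤ from trivial))
      exact ⟨a, ha⟩
    · -- μ₃ ⊄ k : use the norm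
      have hζnk : ∀ w : k, algebraMap k L w ≠ ζ := by
        intro w hw
        apply hex
        refine ⟨w, ?_, ?_⟩
        · apply hφ
          rw [map_pow, hw, hζ3, map_one]
        · intro h; apply hζ1; rw [← hw, h, map_one]
      -- representation of elements of L
      have hmonic : (X ^ 2 + X + 1 : k[X]).Monic := by monicity!
      have haval : aeval ζ (X ^ 2 + X + 1 : k[X]) = 0 := by
        simp only [map_add, map_pow, aeval_X, map_one]
        exact hζq
      have hrepr : ∀ z : L, ∃ c0 c1 : k,
          z = algebraMap k L c0 + algebraMap k L c1 * ζ := by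
        intro z
        have hz : z ∈ Algebra.adjoin k ({ζ} : Set L) := by rw [hgen]; trivial
        rw [Algebra.adjoin_singleton_eq_range_aeval] at hz
        obtain ⟨p, hp⟩ := hz
        have hdiv := Polynomial.modByMonic_add_div p (X ^ 2 + X + 1 : k[X])
        have hpz : aeval ζ p = z := hp
        have hz2 : aeval ζ (p %ₘ (X ^ 2 + X + 1)) = z := by
          rw [← hpz]
          conv_rhs => rw [← hdiv]
          rw [map_add, map_mul, haval, zero_mul, add_zero]
        have hq1 : (X ^ 2 + X + 1 : k[X]) ≠ 1 := by
          intro h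
          have h2 := congrArg (fun r => Polynomial.coeff r 2) h
          simp [Polynomial.coeff_X] at h2
        have hnd : (X ^ 2 + X + 1 : k[X]).natDegree = 2 := by compute_degree!
        have hdeg : (p %ₘ (X ^ 2 + X + 1)).natDegree ≤ 1 := by
          have hlt := Polynomial.natDegree_modByMonic_lt p hmonic hq1
          rw [hnd] at hlt
          omega
        refine ⟨(p %ₘ (X ^ 2 + X + 1)).coeff 0, (p %ₘ (X ^ 2 + X + 1)).coeff 1, ?_⟩
        rw [← hz2]
        conv_lhs => rw [Polynomial.eq_X_add_C_of_natDegree_le_one hdeg]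
        simp only [map_add, map_mul, aeval_X, aeval_C]
        ring
      obtain ⟨x, y, hxy⟩ := hrepr α
      -- basis {ζ, 1}
      have hind : LinearIndependent k ![ζ, (1 : L)] := by
        rw [linearIndependent_fin2]
        constructor
        · simp
        · intro a ha
          simp only [Matrix.cons_val_one, Matrix.head_cons, Matrix.cons_val_zero] at ha
          exact hζnk a (by rw [Algebra.algebraMap_eq_smul_one]; exact ha)
      have hspan : ⊤ ≤ Submodule.span k (Set.range ![ζ, (1 : L)]) := by
        intro z _
        obtain ⟨c0, c1, hz⟩ := hrepr z
        have : z = c0 • (1 : L) + c1 • ζ := by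
          rw [hz, Algebra.smul_def, Algebra.smul_def, mul_one]
        rw [this]
        refine Submodule.add_mem _
          (Submodule.smul_mem _ _ (Submodule.subset_span ⟨1, rfl⟩))
          (Submodule.smul_mem _ _ (Submodule.subset_span ⟨0, rfl⟩))
      let b : Module.Basis (Fin 2) k L := Module.Basis.mk hind hspan
      have hb0 : b 0 = ζ := by simp [b, Module.Basis.mk_apply]
      have hb1 : b 1 = (1 : L) := by simp [b, Module.Basis.mk_apply]
      have hreprval : ∀ s t : k,
          b.repr (s • ζ + t • (1 : L)) 0 = s ∧ b.repr (s • ζ + t • (1 : L)) 1 = t := by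
        intro s t
        have h0' : s • ζ + t • (1 : L) = s • b 0 + t • b 1 := by rw [hb0, hb1]
        rw [h0', map_add, map_smul, map_smul, Module.Basis.repr_self, Module.Basis.repr_self]
        constructor <;> simp [Finsupp.single_apply]
      have hm0 : α * b 0 = (x - y) • ζ + (-y) • (1 : L) := by
        rw [hb0, Algebra.smul_def, Algebra.smul_def, map_sub, map_neg, mul_one]
        linear_combination ζ * hxy + (algebraMap k L y) * hζq
      have hm1' : α * b 1 = y • ζ + x • (1 : L) := by
        rw [hb1, Algebra.smul_def, Algebra.smul_def, mul_one, mul_one]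
        linear_combination hxy
      have hn : x ^ 2 - x * y + y ^ 2 = 1 := by
        have hnorm1 := hnorm hex
        rw [Algebra.norm_eq_matrix_det b, Matrix.det_fin_two] at hnorm1
        rw [Algebra.leftMulMatrix_eq_repr_mul, Algebra.leftMulMatrix_eq_repr_mul,
          Algebra.leftMulMatrix_eq_repr_mul, Algebra.leftMulMatrix_eq_repr_mul,
          hm0, hm1', (hreprval _ _).1, (hreprval _ _).2, (hreprval _ _).1,
          (hreprval _ _).2] at hnorm1
        linear_combination hnorm1
      have hnL : (algebraMap k L x) ^ 2 - algebraMap k L x * algebraMap k L y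
          + (algebraMap k L y) ^ 2 = 1 := by
        have := congrArg (algebraMap k L) hn
        simpa [map_add, map_sub, map_mul, map_pow, map_one] using this
      refine ⟨2 * x - y, ?_⟩
      have key : α * algebraMap k L (2 * x - y) = α ^ 2 + 1 := by
        rw [map_sub, map_mul, map_ofNat]
        linear_combination (-α + algebraMap k L x - algebraMap k L y * ζ
          - algebraMap k L y) * hxy + (-(algebraMap k L y) ^ 2) * hζq + hnL
      have hαinv : α⁻¹ = algebraMap k L (2 * x - y) - α :=
        inv_eq_of_mul_eq_one_right (by linear_combination key)
      rw [hαinv]; ring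
  -- Part 3: the explicit isomorphisms
  set pA : L[X] := X ^ 3 - C α with hpA
  set pB : L[X] := X ^ 3 - C 3 * X - C (α + α⁻¹) with hpB
  set uA := AdjoinRoot.root pA with huA
  set tB := AdjoinRoot.root pB with htB
  set aA := algebraMap L (AdjoinRoot pA) α with haA
  set iA := algebraMap L (AdjoinRoot pA) α⁻¹ with hiA0
  set dA := algebraMap L (AdjoinRoot pA) ((α ^ 2 - 1)⁻¹) with hdA0
  set aB := algebraMap L (AdjoinRoot pB) α with haB
  set iB := algebraMap L (AdjoinRoot pB) α⁻¹ with hiB0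
  set dB := algebraMap L (AdjoinRoot pB) ((α ^ 2 - 1)⁻¹) with hdB0
  have hiA : aA * iA = 1 := by
    rw [haA, hiA0, ← map_mul, mul_inv_cancel₀ h0, map_one]
  have hdA : (aA ^ 2 - 1) * dA = 1 := by
    rw [haA, hdA0, ← map_pow, ← map_one (algebraMap L (AdjoinRoot pA)), ← map_sub, ← map_mul,
      mul_inv_cancel₀ hα2, map_one]
  have hiB : aB * iB = 1 := by
    rw [haB, hiB0, ← map_mul, mul_inv_cancel₀ h0, map_one]
  have hdB : (aB ^ 2 - 1) * dB = 1 := by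
    rw [haB, hdB0, ← map_pow, ← map_one (algebraMap L (AdjoinRoot pB)), ← map_sub, ← map_mul,
      mul_inv_cancel₀ hα2, map_one]
  have hA : uA ^ 3 = aA := by
    have h0' : aeval uA (X ^ 3 - C α : L[X]) = 0 := by
      rw [huA, AdjoinRoot.aeval_eq]; exact AdjoinRoot.mk_self
    simp only [map_sub, map_pow, aeval_X, aeval_C] at h0'
    rw [← haA] at h0'
    linear_combination h0'
  have hB : tB ^ 3 = 3 * tB + (aB + iB) := by
    have h0' : aeval tB (X ^ 3 - C 3 * X - C (α + α⁻¹) : L[X]) = 0 := by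
      rw [htB, AdjoinRoot.aeval_eq]; exact AdjoinRoot.mk_self
    simp only [map_sub, map_mul, map_pow, map_add, aeval_X, aeval_C, map_ofNat] at h0'
    rw [← haB, ← hiB0] at h0'
    linear_combination h0'
  have hcB : algebraMap L (AdjoinRoot pB) (-α / (α ^ 2 - 1)) = -(aB * dB) := by
    rw [div_eq_mul_inv, map_mul, map_neg, haB, hdB0, neg_mul]
  have hcA : algebraMap L (AdjoinRoot pA) (-α / (α ^ 2 - 1)) = -(aA * dA) := by
    rw [div_eq_mul_inv, map_mul, map_neg, haA, hdA0, neg_mul]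
  set e0 : AdjoinRoot pB :=
    algebraMap L (AdjoinRoot pB) (-α / (α ^ 2 - 1)) * (tB ^ 2 - aB * tB - 2) with he0
  set v0 : AdjoinRoot pA := uA + iA * uA ^ 2 with hv0
  have heF : aeval e0 pA = 0 := by
    rw [hpA]
    simp only [map_sub, map_pow, aeval_X, aeval_C]
    rw [← haB, he0, hcB]
    linear_combination ((-1)*tB^3*aB^3*dB^3 + 3*tB^2*aB^4*dB^3 + (-3)*tB*aB^5*dB^3
        + 3*tB*aB^3*dB^3 + aB^6*dB^3 + (-4)*aB^4*dB^3 + (-1)*aB^3*iB*dB^3) * hB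
      + (3*tB^2*aB^3*dB^3 + (-3)*tB*aB^4*dB^3 + aB^5*dB^3 + (-5)*aB^3*dB^3
        + (-1)*aB^2*iB*dB^3 + (-1)*aB*dB^3) * hiB
      + (aB^5*dB^2 + (-2)*aB^3*dB^2 + aB^3*dB + aB*dB^2 + (-1)*aB*dB + aB) * hdB
  have heG : aeval v0 pB = 0 := by
    rw [hpB]
    simp only [map_sub, map_mul, map_pow, map_add, aeval_X, aeval_C, map_ofNat]
    rw [← haA, ← hiA0, hv0]
    linear_combination (aA*iA^3 + iA^3*uA^3 + 3*iA^2*uA^2 + 3*iA*uA + 1) * hA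
      + (aA*iA^2 + 3*iA*uA^2 + iA + 3*uA) * hiA
  set F : AdjoinRoot pA →ₐ[L] AdjoinRoot pB := AdjoinRoot.liftHom pA e0 heF with hF
  set G : AdjoinRoot pB →ₐ[L] AdjoinRoot pA := AdjoinRoot.liftHom pB v0 heG with hG
  have hFroot : F uA = e0 := by rw [hF, huA]; apply AdjoinRoot.liftHom_root
  have hGroot : G tB = v0 := by rw [hG, htB]; apply AdjoinRoot.liftHom_root
  have hFG : F.comp G = AlgHom.id L (AdjoinRoot pB) := by
    apply AdjoinRoot.algHom_ext
    rw [AlgHom.comp_apply, AlgHom.id_apply, ← htB, hGroot, hv0, map_add, map_mul, map_pow,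
      hFroot, hiA0, AlgHom.commutes, ← hiB0, he0, hcB]
    linear_combination (tB*aB^2*iB*dB^2 + (-2)*aB^3*iB*dB^2) * hB
      + (tB^2*aB^3*dB^2 + (-1)*tB^2*aB*dB^2 + (-1)*tB*aB^2*dB^2 + tB*aB*iB*dB^2 + tB*dB^2
        + (-2)*aB^3*dB^2 + (-2)*aB^2*iB*dB^2 + 2*aB*dB^2) * hiB
      + (tB^2*aB*dB + (-1)*tB*dB + tB + (-2)*aB*dB) * hdB
  have hGF : G.comp F = AlgHom.id L (AdjoinRoot pA) := by
    apply AdjoinRoot.algHom_ext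
    rw [AlgHom.comp_apply, AlgHom.id_apply, ← huA, hFroot, he0, map_mul, map_sub, map_sub,
      map_mul, map_pow, hGroot, AlgHom.commutes, hcA, haB, AlgHom.commutes, ← haA,
      map_ofNat, hv0]
    linear_combination ((-1)*aA*iA^2*dA*uA + (-2)*aA*iA*dA) * hA
      + ((-1)*aA*iA*dA*uA + aA*dA*uA^2 + (-2)*aA*dA + (-1)*dA*uA) * hiA
      + (uA) * hdA
  refine ⟨hpart1, ?_, ?_⟩
  · -- Part 2
    intro a hφa
    set q : k[X] := X ^ 3 - C 3 * X - C a with hq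
    have hqmap : q.map (algebraMap k L) = pB := by
      rw [hq, hpB]
      simp only [Polynomial.map_sub, Polynomial.map_mul, Polynomial.map_pow,
        Polynomial.map_X, Polynomial.map_C, Polynomial.map_ofNat, hφa, map_ofNat]
    have E1 : AdjoinRoot pA ≃ₐ[L] AdjoinRoot pB := AlgEquiv.ofAlgHom F G hFG hGF
    have E2 := tensorAdjoinRootEquiv k L q
    rw [hqmap] at E2
    exact ⟨E1.trans E2.symm⟩
  · -- Part 3
    refine ⟨F, G, ?_, ?_, hFG, hGF⟩
    · rw [hFroot, he0, Algebra.smul_def, Algebra.smul_def, haB]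
    · rw [hGroot, hv0, Algebra.smul_def, hiA0]
end

section
/- Let p be an odd prime and let A₁, A₂, A₃ be nonzero rational numbers such that A₃/A₂ is the cube of a nonzero rational number. Assume v_p(A₁) is even, A₁ is not a square in ℚ_p, v_p(A₂) is odd, and v_p(A₂) = v_p(A₃). If there exist w, x₁, x₂, x₃ ∈ ℚ_p with (x₁, x₂, x₃) ≠ (0, 0, 0) and w² = A₁x₁⁶ + A₂x₂⁶ + A₃x₃⁶, then −A₂/A₃ is a square in ℚ_p. -/
open Padic

private lemma padic_val_neg {p : ℕ} [hp : Fact p.Prime] (x : ℚ_[p]) :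
    (-x).valuation = x.valuation := by
  rcases eq_or_ne x 0 with rfl | hx
  · simp
  have hm1 : (-1 : ℚ_[p]).valuation = 0 := by
    have h := Padic.valuation_mul (x := (-1 : ℚ_[p])) (y := (-1 : ℚ_[p]))
      (by norm_num) (by norm_num)
    rw [neg_mul_neg, one_mul, Padic.valuation_one] at h
    omega
  have h := Padic.valuation_mul (x := (-1 : ℚ_[p])) (y := x) (by norm_num) hx
  rw [neg_one_mul, hm1, zero_add] at h
  exact h

private lemma padic_val_inv {p : ℕ} [hp : Fact p.Prime] (x : ℚ_[p]) (hx : x ≠ 0) :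
    (x⁻¹).valuation = -x.valuation := by
  have h := Padic.valuation_mul (x := x⁻¹) (y := x) (inv_ne_zero hx) hx
  rw [inv_mul_cancel₀ hx, Padic.valuation_one] at h
  omega

private lemma padic_val_pow {p : ℕ} [hp : Fact p.Prime] (x : ℚ_[p]) (hx : x ≠ 0) (n : ℕ) :
    (x ^ n).valuation = n * x.valuation := by
  induction n with
  | zero => simp [Padic.valuation_one]
  | succ n ih =>
    rw [pow_succ, Padic.valuation_mul (pow_ne_zero n hx) hx, ih]
    push_cast; ring

private lemma padic_val_add_eq_of_lt {p : ℕ} [hp : Fact p.Prime] {x y : ℚ_[p]}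
    (hx : x ≠ 0) (hy : y ≠ 0) (h : x.valuation < y.valuation) :
    (x + y).valuation = x.valuation := by
  have hxy : x + y ≠ 0 := by
    intro h0
    have hyx : y = -x := by linear_combination h0
    rw [hyx, padic_val_neg] at h
    exact lt_irrefl _ h
  have hub : x.valuation ≤ (x + y).valuation := by
    have h' := Padic.le_valuation_add hxy
    omega
  have hlb : (x + y).valuation ≤ x.valuation := by
    have hx' : (x + y) + (-y) = x := by ring
    have h' := Padic.le_valuation_add (x := x + y) (y := -y) (by rw [hx']; exact hx)
    rw [hx', padic_val_neg] at h'
    omega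
  omega

private lemma padic_norm_lt_one_of_val_pos {p : ℕ} [hp : Fact p.Prime] {x : ℚ_[p]}
    (hx : x ≠ 0) (h : 0 < x.valuation) : ‖x‖ < 1 := by
  rw [Padic.norm_eq_zpow_neg_valuation hx]
  have hp1 : (1 : ℝ) < (p : ℝ) := by exact_mod_cast hp.out.one_lt
  calc (p : ℝ) ^ (-x.valuation) < (p : ℝ) ^ (0 : ℤ) := by
        apply zpow_lt_zpow_right₀ hp1 (by omega)
    _ = 1 := zpow_zero _

private lemma padic_sq_of_norm_sub_one_lt {p : ℕ} [hp : Fact p.Prime] (hodd : p ≠ 2)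
    {u : ℚ_[p]} (hu : ‖u - 1‖ < 1) : ∃ y : ℚ_[p], y ^ 2 = u := by
  have hule : ‖u‖ ≤ 1 := by
    have h := IsUltrametricDist.norm_add_le_max (u - 1) 1
    have he : u - 1 + 1 = u := by ring
    rw [he] at h
    refine le_trans h (max_le hu.le (by simp))
  set z : ℤ_[p] := ⟨u, hule⟩ with hzdef
  set F : Polynomial ℤ_[p] := Polynomial.X ^ 2 - Polynomial.C z with hF
  have heval : ∀ t : ℤ_[p], F.eval t = t ^ 2 - z := by intro t; simp [hF]
  have hder1 : F.derivative.eval 1 = 2 := by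
    rw [hF]
    simp [Polynomial.derivative_sub, Polynomial.derivative_pow]
  have h2 : ‖(2 : ℤ_[p])‖ = 1 := by
    have hle : ‖(2 : ℤ_[p])‖ ≤ 1 := PadicInt.norm_le_one _
    have hnd : ¬ ((p : ℤ) ∣ (2 : ℤ)) := by
      intro hd
      have : p ∣ 2 := by exact_mod_cast hd
      exact hodd ((Nat.prime_dvd_prime_iff_eq hp.out Nat.prime_two).mp this)
    have hnlt : ¬ ‖((2 : ℤ) : ℤ_[p])‖ < 1 := fun hl =>
      hnd ((PadicInt.norm_int_lt_one_iff_dvd 2).mp hl)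
    have h2c : ((2 : ℤ) : ℤ_[p]) = (2 : ℤ_[p]) := by norm_cast
    rw [h2c] at hnlt
    exact le_antisymm hle (not_lt.mp hnlt)
  have hnorm : ‖F.eval 1‖ < ‖F.derivative.eval 1‖ ^ 2 := by
    rw [hder1, h2, heval, one_pow]
    have hval : ‖(1 : ℤ_[p]) - z‖ = ‖u - 1‖ := by
      rw [PadicInt.norm_def]
      push_cast
      rw [norm_sub_rev]
    rw [hval, one_pow]
    exact hu
  obtain ⟨r, hr, -, -, -⟩ := hensels_lemma hnorm
  have hr2 : r ^ 2 = z := by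
    rw [Polynomial.coe_aeval_eq_eval, heval r] at hr
    exact sub_eq_zero.mp hr
  refine ⟨(r : ℚ_[p]), ?_⟩
  calc ((r : ℚ_[p])) ^ 2 = ((r ^ 2 : ℤ_[p]) : ℚ_[p]) := by push_cast; ring
    _ = u := by rw [hr2]

private lemma padic_val_sq_sub_even {p : ℕ} [hp : Fact p.Prime] (hodd : p ≠ 2)
    {a : ℚ_[p]} (ha : a ≠ 0) (hav : Even a.valuation)
    (hns : ¬ ∃ y : ℚ_[p], y ^ 2 = a) (w z : ℚ_[p]) (hwz : w ≠ 0 ∨ z ≠ 0) :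
    w ^ 2 - a * z ^ 2 ≠ 0 ∧ Even (w ^ 2 - a * z ^ 2).valuation := by
  rcases eq_or_ne z 0 with rfl | hz
  · have hw : w ≠ 0 := hwz.resolve_right (by simp)
    have he : w ^ 2 - a * (0 : ℚ_[p]) ^ 2 = w ^ 2 := by ring
    rw [he]
    refine ⟨pow_ne_zero 2 hw, ?_⟩
    rw [padic_val_pow w hw 2]
    exact ⟨w.valuation, by push_cast; ring⟩
  · have haz : a * z ^ 2 ≠ 0 := mul_ne_zero ha (pow_ne_zero 2 hz)
    have hne : w ^ 2 - a * z ^ 2 ≠ 0 := by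
      intro h0
      apply hns
      refine ⟨w / z, ?_⟩
      field_simp
      linear_combination h0
    refine ⟨hne, ?_⟩
    have hvaz : (a * z ^ 2).valuation = a.valuation + 2 * z.valuation := by
      rw [Padic.valuation_mul ha (pow_ne_zero 2 hz), padic_val_pow z hz 2]
      push_cast; ring
    have hEaz : Even ((a * z ^ 2).valuation) := by
      obtain ⟨k, hk⟩ := hav
      exact ⟨k + z.valuation, by omega⟩
    rcases eq_or_ne w 0 with rfl | hw
    · have h0 : (0 : ℚ_[p]) ^ 2 - a * z ^ 2 = -(a * z ^ 2) := by ring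
      rw [h0, padic_val_neg]
      exact hEaz
    · have hw2 : w ^ 2 ≠ 0 := pow_ne_zero 2 hw
      have hvw : (w ^ 2).valuation = 2 * w.valuation := by
        rw [padic_val_pow w hw 2]; push_cast; ring
      have hEw : Even ((w ^ 2).valuation) := ⟨w.valuation, by omega⟩
      have hsub : w ^ 2 - a * z ^ 2 = w ^ 2 + (-(a * z ^ 2)) := by ring
      rcases lt_trichotomy ((w ^ 2).valuation) ((a * z ^ 2).valuation) with hlt | heq | hgt
      · rw [hsub, padic_val_add_eq_of_lt hw2 (neg_ne_zero.mpr haz)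
          (by rwa [padic_val_neg])]
        exact hEw
      · have hge : (w ^ 2).valuation ≤ (w ^ 2 - a * z ^ 2).valuation := by
          have h' := Padic.le_valuation_add (x := w ^ 2) (y := -(a * z ^ 2))
            (by rw [← hsub]; exact hne)
          rw [padic_val_neg] at h'
          rw [hsub]
          omega
        have hle : (w ^ 2 - a * z ^ 2).valuation ≤ (w ^ 2).valuation := by
          by_contra hgt2
          push_neg at hgt2
          have htw : ‖(w ^ 2 - a * z ^ 2) / w ^ 2‖ < 1 := by
            apply padic_norm_lt_one_of_val_pos (div_ne_zero hne hw2)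
            rw [div_eq_mul_inv, Padic.valuation_mul hne (inv_ne_zero hw2),
              padic_val_inv _ hw2]
            omega
          obtain ⟨y, hy⟩ := padic_sq_of_norm_sub_one_lt hodd
            (u := 1 - (w ^ 2 - a * z ^ 2) / w ^ 2) (by
              have hee : 1 - (w ^ 2 - a * z ^ 2) / w ^ 2 - 1
                  = -((w ^ 2 - a * z ^ 2) / w ^ 2) := by ring
              rw [hee, norm_neg]
              exact htw)
          apply hns
          refine ⟨(w / z) * y, ?_⟩
          have hkey : (w / z) ^ 2 * (1 - (w ^ 2 - a * z ^ 2) / w ^ 2) = a := by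
            field_simp
            ring
          rw [mul_pow, hy, hkey]
        have heq2 : (w ^ 2 - a * z ^ 2).valuation = (w ^ 2).valuation :=
          le_antisymm hle hge
        rw [heq2]
        exact hEw
      · rw [hsub, add_comm, padic_val_add_eq_of_lt (neg_ne_zero.mpr haz) hw2
          (by rwa [padic_val_neg]), padic_val_neg]
        exact hEaz

/-- Let `p` be an odd prime and `A₁, A₂, A₃` nonzero rationals with `A₃/A₂` a cube
of a nonzero rational. If `v_p(A₁)` is even, `A₁` is not a square in `ℚ_p`,
`v_p(A₂)` is odd and `v_p(A₂) = v_p(A₃)`, then any nontrivial solution of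
`w² = A₁x₁⁶ + A₂x₂⁶ + A₃x₃⁶` over `ℚ_p` forces `−A₂/A₃` to be a square in `ℚ_p`. -/
theorem stmt_8 (p : ℕ) [Fact p.Prime] (hodd : p ≠ 2)
    (A₁ A₂ A₃ : ℚ) (h1 : A₁ ≠ 0) (h2 : A₂ ≠ 0) (h3 : A₃ ≠ 0)
    (c : ℚ) (hc : c ≠ 0) (hcube : c ^ 3 = A₃ / A₂)
    (hv1 : Even (padicValRat p A₁))
    (hns : ¬ ∃ y : ℚ_[p], y ^ 2 = (A₁ : ℚ_[p]))
    (hv2 : Odd (padicValRat p A₂))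
    (hv23 : padicValRat p A₂ = padicValRat p A₃)
    (hsol : ∃ w x₁ x₂ x₃ : ℚ_[p], (x₁ ≠ 0 ∨ x₂ ≠ 0 ∨ x₃ ≠ 0) ∧
        w ^ 2 = (A₁ : ℚ_[p]) * x₁ ^ 6 + (A₂ : ℚ_[p]) * x₂ ^ 6 + (A₃ : ℚ_[p]) * x₃ ^ 6) :
    ∃ y : ℚ_[p], y ^ 2 = ((-A₂ / A₃ : ℚ) : ℚ_[p]) := by
  obtain ⟨w, x₁, x₂, x₃, hnz, heq⟩ := hsol
  by_contra hns2
  have hA1 : (A₁ : ℚ_[p]) ≠ 0 := by exact_mod_cast h1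
  have hA2 : (A₂ : ℚ_[p]) ≠ 0 := by exact_mod_cast h2
  have hA3 : (A₃ : ℚ_[p]) ≠ 0 := by exact_mod_cast h3
  set b : ℚ_[p] := -(A₂ : ℚ_[p]) / (A₃ : ℚ_[p]) with hb
  have hbcast : ((-A₂ / A₃ : ℚ) : ℚ_[p]) = b := by rw [hb]; push_cast; ring
  have hbne : b ≠ 0 := div_ne_zero (neg_ne_zero.mpr hA2) hA3
  have hbval : b.valuation = 0 := by
    rw [hb, div_eq_mul_inv, Padic.valuation_mul (neg_ne_zero.mpr hA2) (inv_ne_zero hA3),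
      padic_val_neg, padic_val_inv _ hA3, Padic.valuation_ratCast, Padic.valuation_ratCast, hv23]
    ring
  have hbns : ¬ ∃ y : ℚ_[p], y ^ 2 = b := by
    rintro ⟨y, hy⟩
    exact hns2 ⟨y, by rw [hbcast]; exact hy⟩
  by_cases hx23 : x₂ = 0 ∧ x₃ = 0
  · obtain ⟨rfl, rfl⟩ := hx23
    have hx1 : x₁ ≠ 0 := by tauto
    apply hns
    refine ⟨w / x₁ ^ 3, ?_⟩
    have heq' : w ^ 2 = (A₁ : ℚ_[p]) * x₁ ^ 6 := by
      rw [heq]; ring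
    field_simp
    linear_combination heq'
  · have hx23' : x₃ ^ 3 ≠ 0 ∨ x₂ ^ 3 ≠ 0 := by
      rcases not_and_or.mp hx23 with h | h
      · right; exact pow_ne_zero 3 h
      · left; exact pow_ne_zero 3 h
    obtain ⟨hSne, hSev⟩ := padic_val_sq_sub_even hodd hbne
      (by rw [hbval]; exact Even.zero) hbns (x₃ ^ 3) (x₂ ^ 3) hx23'
    have hb' : b * (A₃ : ℚ_[p]) = -(A₂ : ℚ_[p]) := by
      rw [hb]; field_simp
    have hLeqR : w ^ 2 - (A₁ : ℚ_[p]) * (x₁ ^ 3) ^ 2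
        = (A₃ : ℚ_[p]) * ((x₃ ^ 3) ^ 2 - b * (x₂ ^ 3) ^ 2) := by
      linear_combination heq + (x₂ ^ 3) ^ 2 * hb'
    have hRne : (A₃ : ℚ_[p]) * ((x₃ ^ 3) ^ 2 - b * (x₂ ^ 3) ^ 2) ≠ 0 :=
      mul_ne_zero hA3 hSne
    have hLne : w ^ 2 - (A₁ : ℚ_[p]) * (x₁ ^ 3) ^ 2 ≠ 0 := by rw [hLeqR]; exact hRne
    have hw1 : w ≠ 0 ∨ x₁ ^ 3 ≠ 0 := by
      by_contra hcon
      push_neg at hcon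
      apply hLne
      rw [hcon.1, hcon.2]
      ring
    obtain ⟨-, hLev⟩ := padic_val_sq_sub_even hodd hA1
      (by rw [Padic.valuation_ratCast]; exact hv1) hns w (x₁ ^ 3) hw1
    have hRv : ((A₃ : ℚ_[p]) * ((x₃ ^ 3) ^ 2 - b * (x₂ ^ 3) ^ 2)).valuation
        = (A₃ : ℚ_[p]).valuation + ((x₃ ^ 3) ^ 2 - b * (x₂ ^ 3) ^ 2).valuation :=
      Padic.valuation_mul hA3 hSne
    have hA3odd : Odd ((A₃ : ℚ_[p]).valuation) := by
      rw [Padic.valuation_ratCast, ← hv23]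
      exact hv2
    rw [hLeqR, hRv] at hLev
    obtain ⟨k, hk⟩ := hA3odd
    obtain ⟨m, hm⟩ := hSev
    obtain ⟨n, hn⟩ := hLev
    omega
end

section
/- Let a, b be positive integers with gcd(ab, 42) = 1 and b ≡ 1 (mod 56), and suppose that every prime p dividing b for which 7 is a quadratic non-residue modulo p satisfies both p ≡ 2 (mod 3) and p ≡ 3 (mod 4). Then the equation w² = 28a²x₁⁶ + 2b·x₂⁶ + 686b·x₃⁶ has a solution with (x₁, x₂, x₃) ≠ (0, 0, 0) over the real numbers and over the field ℚ_p of p-adic numbers for every prime p. -/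
open Polynomial in
/-- Hensel lifting for an `n`-th root: if `t₀ ^ n ≡ c (mod p)` and
`p ∤ n * t₀ ^ (n-1)`, then `c` has an `n`-th root in `ℚ_p`. -/
lemma padic_pow_root (p : ℕ) [Fact p.Prime] (n : ℕ) (c t₀ : ℤ)
    (h1 : ((t₀ ^ n - c : ℤ) : ZMod p) = 0)
    (h2 : (((n : ℤ) * t₀ ^ (n - 1) : ℤ) : ZMod p) ≠ 0) :
    ∃ t : ℚ_[p], t ^ n = (c : ℚ_[p]) := by
  have hd1 : (p : ℤ) ∣ t₀ ^ n - c := (ZMod.intCast_zmod_eq_zero_iff_dvd _ _).mp h1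
  have hd2 : ¬ (p : ℤ) ∣ (n : ℤ) * t₀ ^ (n - 1) := fun h =>
    h2 ((ZMod.intCast_zmod_eq_zero_iff_dvd _ _).mpr h)
  set F : Polynomial ℤ_[p] := X ^ n - C (c : ℤ_[p]) with hF
  have hev : F.eval ((t₀ : ℤ_[p])) = ((t₀ ^ n - c : ℤ) : ℤ_[p]) := by
    simp [hF]
  have hder : (derivative F).eval ((t₀ : ℤ_[p])) = (((n : ℤ) * t₀ ^ (n - 1) : ℤ) : ℤ_[p]) := by
    simp [hF, derivative_X_pow]
  have hlt : ‖F.eval (t₀ : ℤ_[p])‖ < 1 := by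
    rw [hev]; exact (PadicInt.norm_int_lt_one_iff_dvd _).mpr hd1
  have hde : ‖(derivative F).eval (t₀ : ℤ_[p])‖ = 1 := by
    rw [hder]
    refine le_antisymm (PadicInt.norm_le_one _) (not_lt.mp fun h => hd2 ?_)
    exact (PadicInt.norm_int_lt_one_iff_dvd _).mp h
  obtain ⟨z, hz, -⟩ := hensels_lemma (F := F) (a := (t₀ : ℤ_[p])) (by rw [Polynomial.coe_aeval_eq_eval, hde]; simpa using hlt)
  have hz' : z ^ n = ((c : ℤ) : ℤ_[p]) := by
    have := hz
    simp [hF, sub_eq_zero] at this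
    exact this
  refine ⟨(z : ℚ_[p]), ?_⟩
  exact_mod_cast congrArg (fun x : ℤ_[p] => (x : ℚ_[p])) hz'

/-- For odd `p`, a nonzero square in `ZMod p` has a square root in `ℚ_p`. -/
lemma padic_sq (p : ℕ) [Fact p.Prime] (hp2 : p ≠ 2) (c : ℤ)
    (hc : ((c : ℤ) : ZMod p) ≠ 0) (hsq : IsSquare ((c : ℤ) : ZMod p)) :
    ∃ w : ℚ_[p], w ^ 2 = (c : ℚ_[p]) := by
  obtain ⟨r, hr⟩ := hsq
  have hrne : r ≠ 0 := fun h => hc (by rw [hr, h, mul_zero])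
  have h2ne : ((2 : ℤ) : ZMod p) ≠ 0 := by
    rw [Ne, ZMod.intCast_zmod_eq_zero_iff_dvd]
    intro h
    exact hp2 ((Nat.prime_dvd_prime_iff_eq (Fact.out) Nat.prime_two).mp (by exact_mod_cast h))
  refine padic_pow_root p 2 c (r.val : ℤ) ?_ ?_
  · push_cast
    rw [show ((r.val : ZMod p)) = r from ZMod.natCast_rightInverse r, hr]
    ring
  · push_cast
    rw [show ((r.val : ZMod p)) = r from ZMod.natCast_rightInverse r]
    simp only [pow_one]
    exact mul_ne_zero (by exact_mod_cast h2ne) hrne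

/-- If `p ≡ 2 (mod 3)`, cubing is surjective on `ZMod p`. -/
lemma cube_surj (p : ℕ) [Fact p.Prime] (hp3 : p % 3 = 2) (y : ZMod p) :
    ∃ x : ZMod p, x ^ 3 = y := by
  by_cases hy : y = 0
  · exact ⟨0, by simp [hy]⟩
  · refine ⟨y ^ ((2 * p - 1) / 3), ?_⟩
    rw [← pow_mul]
    have h3 : (2 * p - 1) / 3 * 3 = (p - 1) * 2 + 1 := by omega
    rw [h3, pow_succ, pow_mul, ZMod.pow_card_sub_one_eq_one hy, one_pow, one_mul]

/-- An integer `≡ 1 (mod 8)` is a square in `ℚ_2`. -/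
lemma padic_sq_two (c : ℤ) (hc : c % 8 = 1) : ∃ w : ℚ_[2], w ^ 2 = (c : ℚ_[2]) := by
  haveI : Fact (Nat.Prime 2) := ⟨Nat.prime_two⟩
  set F : Polynomial ℤ_[2] := Polynomial.X ^ 2 - Polynomial.C (c : ℤ_[2]) with hF
  have hev : F.eval 1 = ((1 - c : ℤ) : ℤ_[2]) := by simp [hF]
  have hder : (Polynomial.derivative F).eval 1 = ((2 : ℤ) : ℤ_[2]) := by
    simp [hF, Polynomial.derivative_X_pow]
    exact one_add_one_eq_two
  have hlt := (PadicInt.norm_int_le_pow_iff_dvd (p := 2) (k := 1 - c) (n := 3)).mpr (by omega)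
  have hde : ‖(Polynomial.derivative F).eval 1‖ = (2 : ℝ)⁻¹ := by
    rw [hder]
    have : ((2 : ℤ) : ℤ_[2]) = ((2 : ℕ) : ℤ_[2]) := by norm_cast
    rw [this]
    exact_mod_cast PadicInt.norm_p (p := 2)
  have hnorm : ‖F.eval 1‖ < ‖(Polynomial.derivative F).eval 1‖ ^ 2 := by
    rw [hde, hev]
    refine lt_of_le_of_lt hlt ?_
    norm_num
  obtain ⟨z, hz, -⟩ := hensels_lemma (F := F) (a := 1) hnorm
  have hz' : z ^ 2 = ((c : ℤ) : ℤ_[2]) := by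
    have := hz
    simp [hF, sub_eq_zero] at this
    exact this
  exact ⟨(z : ℚ_[2]), by exact_mod_cast congrArg (fun x : ℤ_[2] => (x : ℚ_[2])) hz'⟩

/-- The Legendre symbol `(a/p)` for a prime `p` given as a hypothesis. -/
def legSym (p : ℕ) (hp : p.Prime) (a : ℤ) : ℤ :=
  haveI : Fact p.Prime := ⟨hp⟩
  legendreSym p a

/-- Solubility of `w² = A₁x₁⁶ + A₂x₂⁶ + A₃x₃⁶` over `ℚ_p` with `(x₁,x₂,x₃) ≠ 0`. -/
def solublePadic (p : ℕ) (hp : p.Prime) (A₁ A₂ A₃ : ℚ) : Prop :=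
  haveI : Fact p.Prime := ⟨hp⟩
  ∃ w x₁ x₂ x₃ : ℚ_[p], (x₁ ≠ 0 ∨ x₂ ≠ 0 ∨ x₃ ≠ 0) ∧
    w ^ 2 = (A₁ : ℚ_[p]) * x₁ ^ 6 + (A₂ : ℚ_[p]) * x₂ ^ 6 + (A₃ : ℚ_[p]) * x₃ ^ 6

/-- Everywhere local solubility of `w² = 28a²x₁⁶ + 2b·x₂⁶ + 686b·x₃⁶` for positive
integers `a, b` with `gcd(ab, 42) = 1`, `b ≡ 1 (mod 56)`, and such that every prime
`p ∣ b` with `(7/p) = −1` satisfies `p ≡ 2 (mod 3)` and `p ≡ 3 (mod 4)`. -/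
theorem stmt_9 (a b : ℕ) (ha : 0 < a) (hb : 0 < b)
    (hgcd : Nat.gcd (a * b) 42 = 1) (hcong : b % 56 = 1)
    (hprimes : ∀ p : ℕ, ∀ hp : p.Prime, p ∣ b → legSym p hp 7 = -1 →
      p % 3 = 2 ∧ p % 4 = 3) :
    (∃ w x₁ x₂ x₃ : ℝ, (x₁ ≠ 0 ∨ x₂ ≠ 0 ∨ x₃ ≠ 0) ∧
        w ^ 2 = 28 * (a : ℝ) ^ 2 * x₁ ^ 6 + 2 * (b : ℝ) * x₂ ^ 6
          + 686 * (b : ℝ) * x₃ ^ 6) ∧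
    ∀ p : ℕ, ∀ hp : p.Prime,
      solublePadic p hp (28 * (a : ℚ) ^ 2) (2 * (b : ℚ)) (686 * (b : ℚ)) := by
  constructor
  · refine ⟨2 * a * Real.sqrt 7, 1, 0, 0, Or.inl one_ne_zero, ?_⟩
    have h7 : Real.sqrt 7 ^ 2 = 7 := Real.sq_sqrt (by norm_num)
    rw [mul_pow, mul_pow, h7]
    ring
  intro p hp
  haveI : Fact p.Prime := ⟨hp⟩
  rw [solublePadic]
  by_cases hp2 : p = 2
  · -- p = 2 : use (x₁,x₂,x₃) = (0,1,7); note 2b + 686b·7⁶ = 16·(b·5044201)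
    subst hp2
    have hb8 : (b : ℤ) % 8 = 1 := by omega
    have hm : ((b : ℤ) * 5044201) % 8 = 1 := by
      rw [Int.mul_emod, hb8]; norm_num
    obtain ⟨s, hs⟩ := padic_sq_two ((b : ℤ) * 5044201) hm
    refine ⟨4 * s, 0, 1, 7, Or.inr (Or.inl one_ne_zero), ?_⟩
    push_cast at hs ⊢
    rw [show (4 * s) ^ 2 = 16 * s ^ 2 by ring, hs]
    ring
  by_cases hp7 : p = 7
  · -- p = 7 : use x₂ = 1, w = √(2b), since 2b ≡ 2 (mod 7) is a square
    subst hp7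
    have hb7 : (b : ℤ) % 7 = 1 := by omega
    obtain ⟨w, hw⟩ := padic_pow_root 7 2 (2 * (b : ℤ)) 3
      (by rw [ZMod.intCast_zmod_eq_zero_iff_dvd]; norm_num; omega)
      (by rw [Ne, ZMod.intCast_zmod_eq_zero_iff_dvd]; decide)
    refine ⟨w, 0, 1, 0, Or.inr (Or.inl one_ne_zero), ?_⟩
    push_cast at hw ⊢
    rw [hw]
    ring
  have hpodd : p ≠ 2 := hp2
  have hd7 : ¬ (p : ℤ) ∣ 7 := by
    intro h
    have : p ∣ 7 := by exact_mod_cast h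
    exact hp7 ((Nat.prime_dvd_prime_iff_eq hp (by norm_num)).mp this)
  have h7ne : ((7 : ℤ) : ZMod p) ≠ 0 := by
    rw [Ne, ZMod.intCast_zmod_eq_zero_iff_dvd]; exact hd7
  by_cases h7 : IsSquare ((7 : ℤ) : ZMod p)
  · -- 7 square mod p : x₁ = 1, w = 2a√7
    obtain ⟨s, hs⟩ := padic_sq p hpodd 7 h7ne h7
    refine ⟨2 * a * s, 1, 0, 0, Or.inl one_ne_zero, ?_⟩
    push_cast at hs ⊢
    rw [mul_pow, mul_pow, hs]
    ring
  have l7 : legendreSym p 7 = -1 := (legendreSym.eq_neg_one_iff p).mpr h7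
  by_cases hpb : p ∣ b
  · -- p ∣ b and (7/p) = -1 : use w = 0, x₂ = t with t⁶ = -343, x₃ = 1
    have hd42 : ¬ p ∣ 42 := by
      intro h
      have h1 : p ∣ a * b := Dvd.dvd.mul_left hpb a
      have := Nat.dvd_gcd h1 h
      rw [hgcd] at this
      exact hp.one_lt.ne' (Nat.dvd_one.mp this)
    obtain ⟨hp3, hp4⟩ := hprimes p hp hpb l7
    have h343ne : ((-343 : ℤ) : ZMod p) ≠ 0 := by
      rw [Ne, ZMod.intCast_zmod_eq_zero_iff_dvd]
      intro h
      have h' : (p : ℤ) ∣ 343 := (dvd_neg).mp h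
      have h'' : p ∣ 7 ^ 3 := by exact_mod_cast h'
      exact hd7 (by exact_mod_cast hp.dvd_of_dvd_pow h'')
    have hleg : legendreSym p (-343) = 1 := by
      rw [show (-343 : ℤ) = -1 * (7 * (7 * 7)) by norm_num,
        legendreSym.mul p (-1) (7 * (7 * 7)), legendreSym.mul p 7 (7 * 7),
        legendreSym.mul p 7 7, legendreSym.at_neg_one hpodd,
        ZMod.χ₄_nat_three_mod_four hp4, l7]
      norm_num
    have hsq : IsSquare ((-343 : ℤ) : ZMod p) := (legendreSym.eq_one_iff p h343ne).mp hleg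
    obtain ⟨r, hr⟩ := hsq
    obtain ⟨x, hx⟩ := cube_surj p hp3 r
    have hx6 : x ^ 6 = ((-343 : ℤ) : ZMod p) := by
      rw [show (6 : ℕ) = 3 * 2 by norm_num, pow_mul, hx, hr]
      ring
    have hxne : x ≠ 0 := by
      intro h
      apply h343ne
      rw [← hx6, h]
      simp
    have hxz : (((x.val : ℤ)) : ZMod p) = x := by
      push_cast
      exact ZMod.natCast_rightInverse x
    obtain ⟨t, ht⟩ := padic_pow_root p 6 (-343) (x.val : ℤ)
      (by rw [Int.cast_sub, Int.cast_pow, hxz, hx6, sub_self])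
      (by
        rw [Int.cast_mul, Int.cast_pow, hxz]
        refine mul_ne_zero ?_ (pow_ne_zero _ hxne)
        rw [Ne, ZMod.intCast_zmod_eq_zero_iff_dvd]
        intro h
        exact hd42 (Nat.dvd_trans (by exact_mod_cast h) (by norm_num)))
    refine ⟨0, 0, t, 1, Or.inr (Or.inr one_ne_zero), ?_⟩
    push_cast at ht ⊢
    rw [ht]
    ring
  · -- p ∤ 2·7·b : one of 2b, 686b is a square mod p
    have hbz : ((b : ℤ) : ZMod p) ≠ 0 := by
      rw [Ne, ZMod.intCast_zmod_eq_zero_iff_dvd]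
      intro h
      exact hpb (by exact_mod_cast h)
    have h2z : ((2 : ℤ) : ZMod p) ≠ 0 := by
      rw [Ne, ZMod.intCast_zmod_eq_zero_iff_dvd]
      intro h
      exact hpodd ((Nat.prime_dvd_prime_iff_eq hp Nat.prime_two).mp (by exact_mod_cast h))
    have h2bne : ((2 * (b : ℤ) : ℤ) : ZMod p) ≠ 0 := by
      rw [Int.cast_mul]
      exact mul_ne_zero h2z hbz
    by_cases h2b : IsSquare ((2 * (b : ℤ) : ℤ) : ZMod p)
    · obtain ⟨w, hw⟩ := padic_sq p hpodd (2 * (b : ℤ)) h2bne h2b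
      refine ⟨w, 0, 1, 0, Or.inr (Or.inl one_ne_zero), ?_⟩
      push_cast at hw ⊢
      rw [hw]
      ring
    · have l2b : legendreSym p (2 * (b : ℤ)) = -1 := (legendreSym.eq_neg_one_iff p).mpr h2b
      have h686ne : ((686 * (b : ℤ) : ℤ) : ZMod p) ≠ 0 := by
        rw [show (686 * (b : ℤ) : ℤ) = 2 * (7 * (7 * 7)) * (b : ℤ) by ring,
          Int.cast_mul, Int.cast_mul, Int.cast_mul, Int.cast_mul]
        exact mul_ne_zero (mul_ne_zero h2z (mul_ne_zero h7ne (mul_ne_zero h7ne h7ne))) hbz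
      have hleg : legendreSym p (686 * (b : ℤ)) = 1 := by
        rw [show (686 * (b : ℤ)) = 2 * (b : ℤ) * (7 * (7 * 7)) by ring,
          legendreSym.mul p (2 * (b : ℤ)) (7 * (7 * 7)), legendreSym.mul p 7 (7 * 7),
          legendreSym.mul p 7 7, l2b, l7]
        norm_num
      have hsq : IsSquare ((686 * (b : ℤ) : ℤ) : ZMod p) :=
        (legendreSym.eq_one_iff p h686ne).mp hleg
      obtain ⟨w, hw⟩ := padic_sq p hpodd (686 * (b : ℤ)) h686ne hsq
      refine ⟨w, 0, 0, 1, Or.inr (Or.inr one_ne_zero), ?_⟩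
      push_cast at hw ⊢
      rw [hw]
      ring
end

section
/- Let a, b be integers not divisible by 7. Then for all w, x₁, x₂, x₃ ∈ ℚ₇ satisfying w² = 28a²x₁⁶ + 2b·x₂⁶ + 686b·x₃⁶ and x₂² + 7x₃² ≠ 0, the 7-adic valuation v₇(x₂² + 7x₃²) is even. -/
instance : Fact (Nat.Prime 7) := ⟨by norm_num⟩

private lemma val_pow7 (x : ℚ_[7]) (hx : x ≠ 0) (n : ℕ) :
    (x ^ n).valuation = n * x.valuation := by
  induction n with
  | zero => simp [Padic.valuation_one]
  | succ k ih =>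
    rw [pow_succ, Padic.valuation_mul (pow_ne_zero _ hx) hx, ih]
    push_cast; ring

private lemma val_inj7 {x y : ℚ_[7]} (hx : x ≠ 0) (hy : y ≠ 0)
    (h : x.valuation ≠ y.valuation) : ‖x‖ ≠ ‖y‖ := by
  rw [Padic.norm_eq_zpow_neg_valuation hx, Padic.norm_eq_zpow_neg_valuation hy]
  intro hc
  exact h (by simpa using (zpow_right_injective₀ (by norm_num : (0:ℝ) < 7)
    (by norm_num) hc))

private lemma val_add7 {x y : ℚ_[7]} (hx : x ≠ 0) (hy : y ≠ 0)
    (h : x.valuation ≠ y.valuation) :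
    x + y ≠ 0 ∧ (x + y).valuation = min x.valuation y.valuation := by
  have hnorm := Padic.add_eq_max_of_ne (val_inj7 hx hy h)
  have hne : x + y ≠ 0 := by
    intro hc
    rw [hc, norm_zero] at hnorm
    rcases max_choice ‖x‖ ‖y‖ with h1 | h1 <;> rw [h1] at hnorm
    · exact hx (norm_eq_zero.mp hnorm.symm)
    · exact hy (norm_eq_zero.mp hnorm.symm)
  refine ⟨hne, ?_⟩
  have key : ‖x + y‖ = (7:ℝ) ^ (-(min x.valuation y.valuation)) := by
    rw [hnorm, Padic.norm_eq_zpow_neg_valuation hx, Padic.norm_eq_zpow_neg_valuation hy]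
    rcases le_total x.valuation y.valuation with hle | hle
    · rw [min_eq_left hle]
      push_cast
      exact max_eq_left (zpow_le_zpow_right₀ (by norm_num : (1:ℝ) ≤ 7) (neg_le_neg hle))
    · rw [min_eq_right hle]
      push_cast
      exact max_eq_right (zpow_le_zpow_right₀ (by norm_num : (1:ℝ) ≤ 7) (neg_le_neg hle))
  rw [Padic.norm_eq_zpow_neg_valuation hne] at key
  have := zpow_right_injective₀ (by norm_num : (0:ℝ) < 7) (by norm_num) key
  omega

private lemma val_nat7 {n : ℕ} (h : ¬ (7:ℕ) ∣ n) (_hn : n ≠ 0) :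
    ((n : ℚ_[7])).valuation = 0 := by
  rw [Padic.valuation_natCast, padicValNat.eq_zero_of_not_dvd h, Nat.cast_zero]

private lemma sq_even7 (w : ℚ_[7]) : Even ((w ^ 2).valuation) := by
  by_cases hw : w = 0
  · simp [hw, Padic.valuation_zero]
  · rw [val_pow7 w hw 2]; exact ⟨w.valuation, by push_cast; ring⟩

/-- If `a, b` are integers not divisible by `7`, then every solution
`w, x₁, x₂, x₃ ∈ ℚ_[7]` of `w² = 28a²x₁⁶ + 2b·x₂⁶ + 686b·x₃⁶` with
`x₂² + 7x₃² ≠ 0` has `v₇(x₂² + 7x₃²)` even. -/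
theorem stmt_10 (a b : ℤ) (ha : ¬ (7 : ℤ) ∣ a) (hb : ¬ (7 : ℤ) ∣ b)
    (w x₁ x₂ x₃ : ℚ_[7])
    (heq : w ^ 2 = 28 * (a : ℚ_[7]) ^ 2 * x₁ ^ 6 + 2 * (b : ℚ_[7]) * x₂ ^ 6
        + 686 * (b : ℚ_[7]) * x₃ ^ 6)
    (hne : x₂ ^ 2 + 7 * x₃ ^ 2 ≠ 0) :
    Even ((x₂ ^ 2 + 7 * x₃ ^ 2).valuation) := by
  -- basic nonvanishing and valuations of constants
  have haZ : (a : ℚ_[7]) ≠ 0 := Int.cast_ne_zero.mpr (by rintro rfl; exact ha ⟨0, by ring⟩)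
  have hbZ : (b : ℚ_[7]) ≠ 0 := Int.cast_ne_zero.mpr (by rintro rfl; exact hb ⟨0, by ring⟩)
  have hva : ((a : ℚ_[7])).valuation = 0 := by
    rw [Padic.valuation_intCast, padicValInt.eq_zero_of_not_dvd (by exact_mod_cast ha)]
    rfl
  have hvb : ((b : ℚ_[7])).valuation = 0 := by
    rw [Padic.valuation_intCast, padicValInt.eq_zero_of_not_dvd (by exact_mod_cast hb)]
    rfl
  have hv7 : ((7 : ℚ_[7])).valuation = 1 := by
    have := Padic.valuation_p (p := 7); exact_mod_cast this
  have hv2 : ((2 : ℚ_[7])).valuation = 0 := by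
    have : ((2:ℕ) : ℚ_[7]).valuation = 0 := val_nat7 (by norm_num) (by norm_num)
    simpa using this
  have hv4 : ((4 : ℚ_[7])).valuation = 0 := by
    have : ((4:ℕ) : ℚ_[7]).valuation = 0 := val_nat7 (by norm_num) (by norm_num)
    simpa using this
  have hv28 : ((28 : ℚ_[7])).valuation = 1 := by
    have h28 : (28 : ℚ_[7]) = 7 * 4 := by norm_num
    rw [h28, Padic.valuation_mul (by norm_num) (by norm_num), hv7, hv4]; norm_num
  have hv686 : ((686 : ℚ_[7])).valuation = 3 := by
    have h686 : (686 : ℚ_[7]) = 7 * (7 * (7 * 2)) := by norm_num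
    rw [h686, Padic.valuation_mul (by norm_num) (by norm_num),
      Padic.valuation_mul (by norm_num) (by norm_num),
      Padic.valuation_mul (by norm_num) (by norm_num), hv7, hv2]; norm_num
  set t1 : ℚ_[7] := 28 * (a : ℚ_[7]) ^ 2 * x₁ ^ 6 with ht1
  set t2 : ℚ_[7] := 2 * (b : ℚ_[7]) * x₂ ^ 6 with ht2
  set t3 : ℚ_[7] := 686 * (b : ℚ_[7]) * x₃ ^ 6 with ht3
  have hvt1 : x₁ ≠ 0 → t1 ≠ 0 ∧ t1.valuation = 1 + 6 * x₁.valuation := by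
    intro h1
    have hne1 : t1 ≠ 0 := by
      rw [ht1]; exact mul_ne_zero (mul_ne_zero (by norm_num) (pow_ne_zero _ haZ))
        (pow_ne_zero _ h1)
    refine ⟨hne1, ?_⟩
    rw [ht1, Padic.valuation_mul (mul_ne_zero (by norm_num) (pow_ne_zero _ haZ))
      (pow_ne_zero _ h1), Padic.valuation_mul (by norm_num) (pow_ne_zero _ haZ),
      hv28, val_pow7 _ haZ, val_pow7 _ h1, hva]
    push_cast; ring
  have hvt2 : x₂ ≠ 0 → t2 ≠ 0 ∧ t2.valuation = 6 * x₂.valuation := by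
    intro h2
    have hne2 : t2 ≠ 0 := by
      rw [ht2]; exact mul_ne_zero (mul_ne_zero (by norm_num) hbZ) (pow_ne_zero _ h2)
    refine ⟨hne2, ?_⟩
    rw [ht2, Padic.valuation_mul (mul_ne_zero (by norm_num) hbZ) (pow_ne_zero _ h2),
      Padic.valuation_mul (by norm_num) hbZ, hv2, val_pow7 _ h2, hvb]
    push_cast; ring
  have hvt3 : x₃ ≠ 0 → t3 ≠ 0 ∧ t3.valuation = 3 + 6 * x₃.valuation := by
    intro h3
    have hne3 : t3 ≠ 0 := by
      rw [ht3]; exact mul_ne_zero (mul_ne_zero (by norm_num) hbZ) (pow_ne_zero _ h3)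
    refine ⟨hne3, ?_⟩
    rw [ht3, Padic.valuation_mul (mul_ne_zero (by norm_num) hbZ) (pow_ne_zero _ h3),
      Padic.valuation_mul (by norm_num) hbZ, hv686, val_pow7 _ h3, hvb]
    push_cast; ring
  have hwEven : Even ((w ^ 2).valuation) := sq_even7 w
  -- the "odd part" y = t1 + t3
  have hy3 : x₃ ≠ 0 → (t1 + t3) ≠ 0 ∧ Odd ((t1 + t3).valuation) ∧
      (t1 + t3).valuation ≤ 3 + 6 * x₃.valuation := by
    intro h3
    obtain ⟨h3ne, h3v⟩ := hvt3 h3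
    by_cases h1 : x₁ = 0
    · have : t1 = 0 := by rw [ht1, h1]; ring
      rw [this, zero_add]
      exact ⟨h3ne, by rw [h3v]; exact ⟨1 + 3 * x₃.valuation, by ring⟩, le_of_eq h3v⟩
    · obtain ⟨h1ne, h1v⟩ := hvt1 h1
      have hdist : t1.valuation ≠ t3.valuation := by rw [h1v, h3v]; omega
      obtain ⟨hsne, hsv⟩ := val_add7 h1ne h3ne hdist
      refine ⟨hsne, ?_, ?_⟩
      · rw [hsv, h1v, h3v]
        rcases le_total (1 + 6 * x₁.valuation) (3 + 6 * x₃.valuation) with h | h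
        · rw [min_eq_left h]; exact ⟨3 * x₁.valuation, by ring⟩
        · rw [min_eq_right h]; exact ⟨1 + 3 * x₃.valuation, by ring⟩
      · rw [hsv, h3v]; exact min_le_right _ _
  by_cases h2 : x₂ = 0
  · -- x₂ = 0 : derive contradiction from the equation
    exfalso
    have h3 : x₃ ≠ 0 := by
      intro hc; apply hne; rw [h2, hc]; ring
    obtain ⟨hyne, hyodd, _⟩ := hy3 h3
    have ht2z : t2 = 0 := by rw [ht2, h2]; ring
    have : w ^ 2 = t1 + t3 := by rw [heq, ht2z]; ring
    rw [this] at hwEven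
    exact (Int.not_odd_iff_even.mpr hwEven) hyodd
  · obtain ⟨h2ne, h2v⟩ := hvt2 h2
    have hx2sq : (x₂ ^ 2).valuation = 2 * x₂.valuation := val_pow7 _ h2 2
    by_cases h3 : x₃ = 0
    · have : x₂ ^ 2 + 7 * x₃ ^ 2 = x₂ ^ 2 := by rw [h3]; ring
      rw [this, hx2sq]
      exact ⟨x₂.valuation, by ring⟩
    · -- show v(x₂) ≤ v(x₃)
      obtain ⟨hyne, hyodd, hyle⟩ := hy3 h3
      have h23 : x₂.valuation ≤ x₃.valuation := by
        by_contra hlt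
        push_neg at hlt
        have hdist : (t1 + t3).valuation ≠ t2.valuation := by
          intro hc
          exact (Int.not_odd_iff_even.mpr (hc ▸ ⟨3 * x₂.valuation, by rw [h2v]; ring⟩)) hyodd
        have hmin : (t1 + t3).valuation < t2.valuation := by
          rw [h2v]; omega
        obtain ⟨hsne, hsv⟩ := val_add7 hyne h2ne hdist
        have hweq : w ^ 2 = (t1 + t3) + t2 := by rw [heq]; ring
        rw [hweq, hsv, min_eq_left hmin.le] at hwEven
        exact (Int.not_odd_iff_even.mpr hwEven) hyodd
      -- conclude
      have h7x3 : 7 * x₃ ^ 2 ≠ 0 := mul_ne_zero (by norm_num) (pow_ne_zero _ h3)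
      have h7x3v : (7 * x₃ ^ 2).valuation = 1 + 2 * x₃.valuation := by
        rw [Padic.valuation_mul (by norm_num) (pow_ne_zero _ h3), hv7, val_pow7 _ h3]
        push_cast; ring
      have hdist : (x₂ ^ 2).valuation ≠ (7 * x₃ ^ 2).valuation := by
        rw [hx2sq, h7x3v]; omega
      obtain ⟨_, hsv⟩ := val_add7 (pow_ne_zero _ h2) h7x3 hdist
      rw [hsv, hx2sq, h7x3v, min_eq_left (by omega)]
      exact ⟨x₂.valuation, by ring⟩
end

section
/- Let K = ℚ(ω) be the third cyclotomic field, where ω is a primitive cube root of unity. For every nonzero rational number q: (i) q is a square in K if and only if q is a square in ℚ or −3q is a square in ℚ; (ii) q is a cube in K if and only if q is a cube in ℚ; (iii) q is a sixth power in K if and only if q is a sixth power in ℚ or −27q is a sixth power in ℚ. -/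
open Polynomial

private lemma aux_cube_one {c : ℚ} (h : c ^ 3 = 1) : c = 1 := by
  have h2 : (c - 1) * (c ^ 2 + c + 1) = 0 := by linear_combination h
  rcases mul_eq_zero.1 h2 with h3 | h3
  · linarith
  · nlinarith [sq_nonneg (2 * c + 1)]

/-- In `ℚ`, a square which is also a cube is a sixth power. -/
private lemma aux_sixth {r a c : ℚ} (ha : a ^ 2 = r) (hc : c ^ 3 = r) :
    ∃ z : ℚ, z ^ 6 = r := by
  by_cases hc0 : c = 0
  · exact ⟨0, by subst hc0; simpa using hc⟩
  · refine ⟨a / c, ?_⟩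
    field_simp
    linear_combination (a^4 + a^2*r + r^2) * ha - r * (c^3 + r) * hc

private lemma aux_indep {ζ : CyclotomicField 3 ℚ} (hζ : IsPrimitiveRoot ζ ((3 : ℕ+) : ℕ))
    (a b : ℚ) (h : (a : CyclotomicField 3 ℚ) + (b : CyclotomicField 3 ℚ) * ζ = 0) :
    a = 0 ∧ b = 0 := by
  have hcast : Function.Injective (Rat.cast (K := CyclotomicField 3 ℚ)) :=
    Rat.cast_injective
  by_cases hb : b = 0
  · subst hb
    refine ⟨hcast ?_, rfl⟩
    simpa using h
  · exfalso
    have hbK : (b : CyclotomicField 3 ℚ) ≠ 0 := by exact_mod_cast hb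
    have hz : ζ = ((-a / b : ℚ) : CyclotomicField 3 ℚ) := by
      push_cast
      field_simp
      linear_combination h
    have h3 : ζ ^ 3 = 1 := hζ.pow_eq_one
    rw [hz] at h3
    have h3' : (-a / b : ℚ) ^ 3 = 1 := by exact_mod_cast h3
    have := aux_cube_one h3'
    rw [hz, this] at hζ
    exact hζ.ne_one (by norm_num) (by norm_num)

private lemma aux_span {ζ : CyclotomicField 3 ℚ} (hζ : IsPrimitiveRoot ζ ((3 : ℕ+) : ℕ))
    (y : CyclotomicField 3 ℚ) :
    ∃ a b : ℚ, y = (a : CyclotomicField 3 ℚ) + (b : CyclotomicField 3 ℚ) * ζ := by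
  haveI : IsCyclotomicExtension {((3 : ℕ+) : ℕ)} ℚ (CyclotomicField 3 ℚ) :=
    CyclotomicField.isCyclotomicExtension 3 ℚ
  obtain ⟨f, hf, hy⟩ := (hζ.powerBasis ℚ).exists_eq_aeval y
  have hdim : (hζ.powerBasis ℚ).dim = 2 := by
    rw [IsPrimitiveRoot.powerBasis_dim,
      ← hζ.minpoly_eq_cyclotomic_of_irreducible (cyclotomic.irreducible_rat (by norm_num)),
      natDegree_cyclotomic]
    decide
  rw [hdim] at hf
  have hf1 : f.natDegree ≤ 1 := Nat.lt_succ_iff.mp hf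
  refine ⟨f.coeff 0, f.coeff 1, ?_⟩
  rw [hy, IsPrimitiveRoot.powerBasis_gen]
  conv_lhs => rw [Polynomial.eq_X_add_C_of_natDegree_le_one hf1]
  simp [eq_ratCast]
  ring

/-- Let `K = ℚ(ω)` be the third cyclotomic field. A nonzero rational `q` is:
(i) a square in `K` iff `q` or `−3q` is a square in `ℚ`;
(ii) a cube in `K` iff `q` is a cube in `ℚ`;
(iii) a sixth power in `K` iff `q` or `−27q` is a sixth power in `ℚ`. -/
theorem stmt_11 (q : ℚ) (hq : q ≠ 0) :
    ((∃ y : CyclotomicField 3 ℚ, y ^ 2 = algebraMap ℚ (CyclotomicField 3 ℚ) q) ↔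
      ((∃ z : ℚ, z ^ 2 = q) ∨ (∃ z : ℚ, z ^ 2 = -3 * q))) ∧
    ((∃ y : CyclotomicField 3 ℚ, y ^ 3 = algebraMap ℚ (CyclotomicField 3 ℚ) q) ↔
      (∃ z : ℚ, z ^ 3 = q)) ∧
    ((∃ y : CyclotomicField 3 ℚ, y ^ 6 = algebraMap ℚ (CyclotomicField 3 ℚ) q) ↔
      ((∃ z : ℚ, z ^ 6 = q) ∨ (∃ z : ℚ, z ^ 6 = -27 * q))) := by
  simp only [eq_ratCast]
  have hζ := @IsCyclotomicExtension.zeta_spec 3 _ ℚ (CyclotomicField 3 ℚ) _ _ _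
    (CyclotomicField.isCyclotomicExtension 3 ℚ)
  set ζ := @IsCyclotomicExtension.zeta 3 _ ℚ (CyclotomicField 3 ℚ) _ _ _
    (CyclotomicField.isCyclotomicExtension 3 ℚ) with hζdef
  have h3 : ζ ^ 3 = 1 := hζ.pow_eq_one
  have hne1 : ζ ≠ 1 := hζ.ne_one (by norm_num)
  have h2 : ζ ^ 2 = -1 - ζ := by
    have hfac : (ζ - 1) * (ζ ^ 2 + ζ + 1) = 0 := by linear_combination h3
    rcases mul_eq_zero.1 hfac with h | h
    · exact absurd (sub_eq_zero.1 h) hne1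
    · linear_combination h
  -- the square root of -3
  have hs2 : (2 * ζ + 1) ^ 2 = -3 := by linear_combination (4 : CyclotomicField 3 ℚ) * h2
  have hs0 : (2 * ζ + 1) ≠ 0 := by
    intro h
    rw [h] at hs2
    norm_num at hs2
  -- forward direction for squares
  have sq_fwd : (∃ y : CyclotomicField 3 ℚ, y ^ 2 = (q : CyclotomicField 3 ℚ)) →
      ((∃ z : ℚ, z ^ 2 = q) ∨ (∃ z : ℚ, z ^ 2 = -3 * q)) := by
    rintro ⟨y, hy⟩
    obtain ⟨a, b, rfl⟩ := aux_span hζ y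
    have hexp : ((a : CyclotomicField 3 ℚ) + (b : CyclotomicField 3 ℚ) * ζ) ^ 2 =
        ((a ^ 2 - b ^ 2 - q : ℚ) : CyclotomicField 3 ℚ) +
        ((2 * a * b - b ^ 2 : ℚ) : CyclotomicField 3 ℚ) * ζ + (q : CyclotomicField 3 ℚ) := by
      push_cast
      linear_combination (b : CyclotomicField 3 ℚ) ^ 2 * h2
    rw [hexp] at hy
    obtain ⟨e1, e2⟩ := aux_indep hζ (a ^ 2 - b ^ 2 - q) (2 * a * b - b ^ 2) (by linear_combination hy)
    have hb : b * (2 * a - b) = 0 := by linear_combination e2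
    rcases mul_eq_zero.1 hb with hb | hb
    · exact Or.inl ⟨a, by linear_combination e1 + b * hb⟩
    · exact Or.inr ⟨3 * a, by linear_combination -3 * e1 + 3 * (2 * a + b) * hb⟩
  -- forward direction for cubes
  have cube_fwd : (∃ y : CyclotomicField 3 ℚ, y ^ 3 = (q : CyclotomicField 3 ℚ)) →
      (∃ z : ℚ, z ^ 3 = q) := by
    rintro ⟨y, hy⟩
    obtain ⟨a, b, rfl⟩ := aux_span hζ y
    have hexp : ((a : CyclotomicField 3 ℚ) + (b : CyclotomicField 3 ℚ) * ζ) ^ 3 =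
        ((a ^ 3 - 3 * a * b ^ 2 + b ^ 3 - q : ℚ) : CyclotomicField 3 ℚ) +
        ((3 * a ^ 2 * b - 3 * a * b ^ 2 : ℚ) : CyclotomicField 3 ℚ) * ζ +
        (q : CyclotomicField 3 ℚ) := by
      push_cast
      linear_combination (3 * (a : CyclotomicField 3 ℚ) * (b : CyclotomicField 3 ℚ) ^ 2) * h2
        + (b : CyclotomicField 3 ℚ) ^ 3 * h3
    rw [hexp] at hy
    obtain ⟨e1, e2⟩ := aux_indep hζ (a ^ 3 - 3 * a * b ^ 2 + b ^ 3 - q) (3 * a ^ 2 * b - 3 * a * b ^ 2) (by linear_combination hy)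
    have hb : a * (b * (a - b)) = 0 := by linear_combination e2 / 3
    rcases mul_eq_zero.1 hb with hb | hb
    · exact ⟨b, by linear_combination e1 + (3 * b ^ 2 - a ^ 2) * hb⟩
    · rcases mul_eq_zero.1 hb with hb' | hb'
      · exact ⟨a, by linear_combination e1 + (3 * a * b - b ^ 2) * hb'⟩
      · exact ⟨-a, by linear_combination e1 - (2 * a ^ 2 + 2 * a * b - b ^ 2) * hb'⟩
  constructor
  · constructor
    · exact sq_fwd
    · rintro (⟨z, hz⟩ | ⟨z, hz⟩)
      · exact ⟨(z : CyclotomicField 3 ℚ), by exact_mod_cast hz⟩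
      · refine ⟨(z : CyclotomicField 3 ℚ) / 3 * (2 * ζ + 1), ?_⟩
        have hzK : (z : CyclotomicField 3 ℚ) ^ 2 = -3 * (q : CyclotomicField 3 ℚ) := by
          exact_mod_cast congrArg (Rat.cast (K := CyclotomicField 3 ℚ)) hz
        linear_combination (4 * (z : CyclotomicField 3 ℚ) ^ 2 / 9) * h2 - (1/3 :
          CyclotomicField 3 ℚ) * hzK
  refine ⟨⟨cube_fwd, ?_⟩, ?_, ?_⟩
  · rintro ⟨z, hz⟩
    exact ⟨(z : CyclotomicField 3 ℚ), by exact_mod_cast hz⟩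
  · -- sixth powers forward
    rintro ⟨y, hy⟩
    have hsq : ∃ y2 : CyclotomicField 3 ℚ, y2 ^ 2 = (q : CyclotomicField 3 ℚ) :=
      ⟨y ^ 3, by rw [← pow_mul]; exact hy⟩
    have hcu : ∃ z : ℚ, z ^ 3 = q :=
      cube_fwd ⟨y ^ 2, by rw [← pow_mul]; exact hy⟩
    obtain ⟨c, hc⟩ := hcu
    rcases sq_fwd hsq with ⟨a, ha⟩ | ⟨a, ha⟩
    · exact Or.inl (aux_sixth ha hc)
    · refine Or.inr (aux_sixth (a := 3 * a) (c := -3 * c) ?_ ?_)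
      · linear_combination 9 * ha
      · linear_combination -27 * hc
  · rintro (⟨z, hz⟩ | ⟨z, hz⟩)
    · exact ⟨(z : CyclotomicField 3 ℚ), by exact_mod_cast hz⟩
    · refine ⟨(z : CyclotomicField 3 ℚ) / (2 * ζ + 1), ?_⟩
      have hzK : (z : CyclotomicField 3 ℚ) ^ 6 = -27 * (q : CyclotomicField 3 ℚ) := by
        exact_mod_cast congrArg (Rat.cast (K := CyclotomicField 3 ℚ)) hz
      have hs6 : (2 * ζ + 1) ^ 6 = -27 := by
        calc (2 * ζ + 1) ^ 6 = ((2 * ζ + 1) ^ 2) ^ 3 := by ring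
        _ = -27 := by rw [hs2]; norm_num
      rw [div_pow, hs6, hzK]
      field_simp
end

section
/- Let K be the subfield of ℂ generated over ℚ by a primitive 12th root of unity ζ₁₂ and the real cube root of 2. For every nonzero rational number q: (i) q is a square in K if and only if one of q, −q, 3q, −3q is a square in ℚ; (ii) q is a cube in K if and only if one of q, 2q, 4q is a cube in ℚ. -/
theorem no_rat_cube (k : ℤ) (hk : k = 2 ∨ k = 4) (z : ℚ) : z^3 ≠ (k:ℚ) := by
  intro h
  have hd : (z.den : ℚ) ≠ 0 := by exact_mod_cast z.den_ne_zero
  have hz : z = (z.num : ℚ) / (z.den : ℚ) := (Rat.num_div_den z).symm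
  have hint : z.num ^ 3 = k * (z.den:ℤ)^3 := by
    have : (z.num:ℚ)^3 = (k:ℚ) * (z.den:ℚ)^3 := by
      rw [hz] at h; field_simp at h; rw [mul_comm]; exact_mod_cast h
    exact_mod_cast this
  have h2num : (2:ℤ) ∣ z.num := by
    have : (2:ℤ) ∣ z.num ^ 3 := by
      rcases hk with rfl | rfl
      · exact ⟨(z.den:ℤ)^3, hint⟩
      · exact ⟨2*(z.den:ℤ)^3, by linarith⟩
    exact Int.Prime.dvd_pow' Nat.prime_two this
  obtain ⟨m, hm⟩ := h2num
  have h2den : (2:ℤ) ∣ (z.den:ℤ) := by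
    have : (2:ℤ) ∣ (z.den:ℤ) ^ 3 := by
      rw [hm] at hint
      rcases hk with rfl | rfl
      · exact ⟨2*m^3, by linarith⟩
      · exact ⟨m^3, by linarith⟩
    exact Int.Prime.dvd_pow' Nat.prime_two this
  have hcop := z.reduced
  have h1 : 2 ∣ z.num.natAbs := by
    have h2' : ((2:ℕ):ℤ) ∣ z.num := by exact_mod_cast (⟨m, hm⟩ : (2:ℤ) ∣ z.num)
    simpa using Int.natAbs_dvd_natAbs.mpr h2'
  have h2 : 2 ∣ z.den := by exact_mod_cast h2den
  have := Nat.Coprime.eq_one_of_dvd (Nat.Coprime.coprime_dvd_left h1 hcop) h2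
  norm_num at this

noncomputable def sq3 : ℝ := Real.sqrt 3

theorem sq3_sq : sq3^2 = 3 := Real.sq_sqrt (by norm_num)

theorem lin3 (a b : ℚ) (h : (a:ℝ) + (b:ℝ) * sq3 = 0) : a = 0 ∧ b = 0 := by
  have hirr : Irrational sq3 := by simpa [sq3] using Nat.prime_three.irrational_sqrt
  by_cases hb : b = 0
  · subst hb; simp at h; exact ⟨by exact_mod_cast h, rfl⟩
  · exfalso
    apply hirr
    refine ⟨-a/b, ?_⟩
    have hb' : (b:ℝ) ≠ 0 := by exact_mod_cast hb
    push_cast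
    field_simp
    linarith

def Q3 : Set ℝ := {x | ∃ a b : ℚ, x = (a:ℝ) + (b:ℝ) * sq3}

theorem q3_rat (a : ℚ) : ((a:ℝ)) ∈ Q3 := ⟨a, 0, by push_cast; ring⟩
theorem q3_zero : (0:ℝ) ∈ Q3 := by simpa using q3_rat 0
theorem q3_add {x y : ℝ} (hx : x ∈ Q3) (hy : y ∈ Q3) : x + y ∈ Q3 := by
  obtain ⟨a, b, rfl⟩ := hx; obtain ⟨c, d, rfl⟩ := hy
  exact ⟨a + c, b + d, by push_cast; ring⟩
theorem q3_neg {x : ℝ} (hx : x ∈ Q3) : -x ∈ Q3 := by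
  obtain ⟨a, b, rfl⟩ := hx; exact ⟨-a, -b, by push_cast; ring⟩
theorem q3_sub {x y : ℝ} (hx : x ∈ Q3) (hy : y ∈ Q3) : x - y ∈ Q3 := by
  simpa [sub_eq_add_neg] using q3_add hx (q3_neg hy)
theorem q3_mul {x y : ℝ} (hx : x ∈ Q3) (hy : y ∈ Q3) : x * y ∈ Q3 := by
  obtain ⟨a, b, rfl⟩ := hx; obtain ⟨c, d, rfl⟩ := hy
  refine ⟨a*c + 3*b*d, a*d + b*c, ?_⟩
  push_cast
  linear_combination ((b:ℝ)*(d:ℝ)) * sq3_sq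
theorem q3_inv {x : ℝ} (hx : x ∈ Q3) : x⁻¹ ∈ Q3 := by
  obtain ⟨a, b, rfl⟩ := hx
  by_cases h0 : (a:ℝ) + (b:ℝ) * sq3 = 0
  · rw [h0]; simpa using q3_zero
  · have hden : (a:ℝ)^2 - 3*(b:ℝ)^2 ≠ 0 := by
      intro hd
      have hsub : ((a:ℝ) + (b:ℝ)*sq3) * ((a:ℝ) - (b:ℝ)*sq3) = 0 := by
        linear_combination hd + (-(b:ℝ)^2) * sq3_sq
      rcases mul_eq_zero.mp hsub with h | h
      · exact h0 h
      · obtain ⟨ha, hb⟩ := lin3 a (-b) (by push_cast; linarith)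
        apply h0
        have hb' : b = 0 := by simpa using hb
        rw [ha, hb']; simp
    have hqq : (a^2 - 3*b^2 : ℚ) ≠ 0 := by
      intro hq; apply hden
      have : ((a^2 - 3*b^2 : ℚ):ℝ) = ((0:ℚ):ℝ) := by rw [hq]
      push_cast at this; linarith
    refine ⟨a/(a^2-3*b^2), -b/(a^2-3*b^2), ?_⟩
    have hmul : ((a:ℝ) + (b:ℝ)*sq3) *
        (((a/(a^2-3*b^2) : ℚ):ℝ) + ((-b/(a^2-3*b^2) : ℚ):ℝ) * sq3) = 1 := by
      push_cast
      have e : ((a:ℝ) + b*sq3) * (a/(a^2-3*b^2) + (-b/(a^2-3*b^2))*sq3) = ((a:ℝ)^2 - 3*b^2)/((a:ℝ)^2-3*b^2) := by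
        rw [div_eq_mul_inv, div_eq_mul_inv, div_eq_mul_inv]; linear_combination (-(b:ℝ)^2 * ((a:ℝ)^2-3*b^2)⁻¹) * sq3_sq
      rw [e, div_self hden]
    exact (inv_eq_of_mul_eq_one_right hmul)
theorem q3_div {x y : ℝ} (hx : x ∈ Q3) (hy : y ∈ Q3) : x / y ∈ Q3 := by
  simpa [div_eq_mul_inv] using q3_mul hx (q3_inv hy)

/-- an element of Q3 whose cube is rational is itself rational -/
theorem q3_cube_rat {x : ℝ} (hx : x ∈ Q3) {c : ℚ} (h : x^3 = (c:ℝ)) :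
    ∃ z : ℚ, x = (z:ℝ) ∧ z^3 = c := by
  obtain ⟨a, b, rfl⟩ := hx
  have key : ((a^3 + 9*a*b^2 - c : ℚ) : ℝ) + ((3*a^2*b + 3*b^3 : ℚ):ℝ) * sq3 = 0 := by
    push_cast
    linear_combination h + (-3*(a:ℝ)*(b:ℝ)^2 - (b:ℝ)^3*sq3) * sq3_sq
  obtain ⟨h1, h2⟩ := lin3 _ _ key
  have hb : b = 0 := by
    have h2' : 3*b*(a^2 + b^2) = 0 := by linear_combination h2
    rcases mul_eq_zero.mp h2' with h' | h'
    · linarith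
    · nlinarith [sq_nonneg a, sq_nonneg b]
  subst hb
  refine ⟨a, by push_cast; ring, by linear_combination h1⟩

theorem q3_sq_rat {x : ℝ} (hx : x ∈ Q3) {c : ℚ} (h : x^2 = (c:ℝ)) :
    (∃ z : ℚ, z^2 = c) ∨ (∃ z : ℚ, z^2 = 3*c) := by
  obtain ⟨a, b, rfl⟩ := hx
  have key : ((a^2 + 3*b^2 - c : ℚ) : ℝ) + ((2*a*b : ℚ):ℝ) * sq3 = 0 := by
    push_cast
    linear_combination h + (-(b:ℝ)^2) * sq3_sq
  obtain ⟨h1, h2⟩ := lin3 _ _ key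
  have hab : a * b = 0 := by linarith
  rcases mul_eq_zero.mp hab with ha | hb
  · right; exact ⟨3*b, by subst ha; linear_combination 3*h1⟩
  · left; exact ⟨a, by subst hb; linear_combination h1⟩

noncomputable def tR : ℝ := (2:ℝ) ^ ((1:ℝ)/3)

theorem tR_cube : tR^3 = 2 := by
  rw [tR, ← Real.rpow_natCast ((2:ℝ)^((1:ℝ)/3)) 3, ← Real.rpow_mul (by norm_num)]
  norm_num

theorem tR_not_q3 : tR ∉ Q3 := by
  intro h
  obtain ⟨z, hz, hz3⟩ := q3_cube_rat h (c := 2) (by rw [tR_cube]; norm_num)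
  exact no_rat_cube 2 (Or.inl rfl) z (by rw [hz3]; norm_num)

/-- no cube root of 2 in Q3, more generally an element with cube 2 or 4 -/
theorem q3_cube_ne {x : ℝ} (hx : x ∈ Q3) (k : ℤ) (hk : k = 2 ∨ k = 4) : x^3 ≠ (k:ℝ) := by
  intro h
  have : ((k:ℚ):ℝ) = (k:ℝ) := by push_cast; ring
  obtain ⟨z, hz, hz3⟩ := q3_cube_rat hx (c := (k:ℚ)) (by rw [h, this])
  exact no_rat_cube k hk z hz3

/-- linear independence of 1, t, t² over Q3 -/
theorem real_li {x₁ x₂ x₃ : ℝ} (h1 : x₁ ∈ Q3) (h2 : x₂ ∈ Q3) (h3 : x₃ ∈ Q3)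
    (h : x₁ + x₂ * tR + x₃ * tR^2 = 0) : x₁ = 0 ∧ x₂ = 0 ∧ x₃ = 0 := by
  by_cases hx3 : x₃ = 0
  · subst hx3
    by_cases hx2 : x₂ = 0
    · subst hx2; simp at h; exact ⟨by linarith, rfl, rfl⟩
    · exfalso
      apply tR_not_q3
      have : tR = -x₁ / x₂ := by field_simp; linarith
      rw [this]; exact q3_div (q3_neg h1) h2
  · exfalso
    set c := -x₁ / x₃ with hc
    set d := -x₂ / x₃ with hd
    have hcQ : c ∈ Q3 := q3_div (q3_neg h1) h3
    have hdQ : d ∈ Q3 := q3_div (q3_neg h2) h3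
    have hquad : tR^2 = c + d * tR := by
      rw [hc, hd]; field_simp; linear_combination h
    have hcube : 2 = d*c + (c + d^2) * tR := by
      have : tR^3 = tR * tR^2 := by ring
      rw [tR_cube] at this
      rw [hquad] at this
      calc (2:ℝ) = tR * (c + d*tR) := this
        _ = c*tR + d*tR^2 := by ring
        _ = c*tR + d*(c + d*tR) := by rw [hquad]
        _ = d*c + (c + d^2)*tR := by ring
    by_cases hcd : c + d^2 = 0
    · have hdc : d * c = 2 := by rw [hcd] at hcube; linarith
      have : (-d)^3 = (2:ℝ) := by
        have hceq : c = -d^2 := by linarith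
        rw [hceq] at hdc; nlinarith [hdc]
      exact q3_cube_ne (q3_neg hdQ) 2 (Or.inl rfl) (by rw [this]; norm_num)
    · apply tR_not_q3
      have : tR = (2 - d*c) / (c + d^2) := by field_simp; linarith
      rw [this]
      have hsum : (c + d^2) ∈ Q3 := by rw [pow_two]; exact q3_add hcQ (q3_mul hdQ hdQ)
      exact q3_div (q3_sub (q3_rat 2) (q3_mul hdQ hcQ)) hsum

noncomputable def Tc : ℂ := ((tR : ℝ) : ℂ)

theorem Tc_cube : Tc^3 = 2 := by
  rw [Tc]
  norm_cast
  exact tR_cube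

def Q4 : Set ℂ := {z | z.re ∈ Q3 ∧ z.im ∈ Q3}

theorem q4_rat (a : ℚ) : ((a:ℂ)) ∈ Q4 :=
  ⟨by rw [Complex.ratCast_re]; exact q3_rat a, by rw [Complex.ratCast_im]; exact q3_zero⟩
theorem q4_zero : (0:ℂ) ∈ Q4 := ⟨by simpa using q3_zero, by simpa using q3_zero⟩
theorem q4_add {x y : ℂ} (hx : x ∈ Q4) (hy : y ∈ Q4) : x + y ∈ Q4 :=
  ⟨by simpa using q3_add hx.1 hy.1, by simpa using q3_add hx.2 hy.2⟩
theorem q4_neg {x : ℂ} (hx : x ∈ Q4) : -x ∈ Q4 :=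
  ⟨by simpa using q3_neg hx.1, by simpa using q3_neg hx.2⟩
theorem q4_mul {x y : ℂ} (hx : x ∈ Q4) (hy : y ∈ Q4) : x * y ∈ Q4 := by
  constructor
  · rw [Complex.mul_re]; exact q3_sub (q3_mul hx.1 hy.1) (q3_mul hx.2 hy.2)
  · rw [Complex.mul_im]; exact q3_add (q3_mul hx.1 hy.2) (q3_mul hx.2 hy.1)
theorem q4_inv {x : ℂ} (hx : x ∈ Q4) : x⁻¹ ∈ Q4 := by
  have hn : Complex.normSq x ∈ Q3 := by
    rw [Complex.normSq_apply]; exact q3_add (q3_mul hx.1 hx.1) (q3_mul hx.2 hx.2)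
  constructor
  · rw [Complex.inv_re]; exact q3_div hx.1 hn
  · rw [Complex.inv_im]; exact q3_div (q3_neg hx.2) hn
theorem q4_div {x y : ℂ} (hx : x ∈ Q4) (hy : y ∈ Q4) : x / y ∈ Q4 := by
  rw [div_eq_mul_inv]; exact q4_mul hx (q4_inv hy)
theorem q4_sub {x y : ℂ} (hx : x ∈ Q4) (hy : y ∈ Q4) : x - y ∈ Q4 := by
  rw [sub_eq_add_neg]; exact q4_add hx (q4_neg hy)

theorem cx_split {X Y : ℝ} {c : ℚ} (h : (X:ℂ) + (Y:ℂ)*Complex.I = ((c:ℚ):ℂ)) :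
    X = (c:ℝ) ∧ Y = 0 := by
  have h1 := congrArg Complex.re h
  have h2 := congrArg Complex.im h
  simp only [Complex.add_re, Complex.add_im, Complex.mul_re, Complex.mul_im,
    Complex.ofReal_re, Complex.ofReal_im, Complex.I_re, Complex.I_im,
    Complex.ratCast_re, Complex.ratCast_im, mul_zero, mul_one, zero_mul,
    sub_zero, add_zero, zero_add] at h1 h2
  exact ⟨h1, h2⟩

/-- no cube root of 2 in Q4 -/
theorem q4_cube_ne2 {w : ℂ} (hw : w ∈ Q4) : w^3 ≠ 2 := by
  intro h
  have hns : Complex.normSq w ^ 3 = 4 := by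
    have := map_pow Complex.normSq w 3
    rw [h] at this
    rw [← this]
    norm_num [Complex.normSq_apply]
  have hn : Complex.normSq w ∈ Q3 := by
    rw [Complex.normSq_apply]; exact q3_add (q3_mul hw.1 hw.1) (q3_mul hw.2 hw.2)
  exact q3_cube_ne hn 4 (Or.inr rfl) (by rw [hns]; norm_num)

/-- an element of Q4 with rational cube: the cube is a rational cube -/
theorem q4_cube_rat {w : ℂ} (hw : w ∈ Q4) {c : ℚ} (h : w^3 = ((c:ℚ):ℂ)) :
    ∃ z : ℚ, z^3 = c := by
  set u := w.re with hu'
  set v := w.im with hv'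
  have hw' : w = (u:ℂ) + (v:ℂ)*Complex.I := (Complex.re_add_im w).symm
  have hexp : ((u:ℂ) + (v:ℂ)*Complex.I)^3
      = (((u^3 - 3*u*v^2 : ℝ)):ℂ) + (((3*u^2*v - v^3 : ℝ)):ℂ)*Complex.I := by
    push_cast
    linear_combination (3*(u:ℂ)*(v:ℂ)^2 + (v:ℂ)^3*Complex.I) * Complex.I_sq
  rw [hw', hexp] at h
  obtain ⟨h1, h2⟩ := cx_split h
  have hv : v * (3*u^2 - v^2) = 0 := by linear_combination h2
  rcases mul_eq_zero.mp hv with hv0 | hv2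
  · obtain ⟨z, hz, hz3⟩ := q3_cube_rat hw.1 (c := c) (by rw [← h1, hv0]; ring)
    exact ⟨z, hz3⟩
  · have hv2' : v^2 = 3*u^2 := by linarith
    have hu3 : u^3 = ((-c/8 : ℚ):ℝ) := by
      push_cast
      linear_combination (-1/8 : ℝ) * h1 + (-3*u/8) * hv2'
    obtain ⟨z, hz, hz3⟩ := q3_cube_rat hw.1 hu3
    exact ⟨-2*z, by linear_combination (-8 : ℚ)*hz3⟩

/-- an element of Q4 with rational square -/
theorem q4_sq_rat {w : ℂ} (hw : w ∈ Q4) {c : ℚ} (h : w^2 = ((c:ℚ):ℂ)) :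
    (∃ z : ℚ, z^2 = c) ∨ (∃ z : ℚ, z^2 = -c) ∨ (∃ z : ℚ, z^2 = 3*c) ∨ (∃ z : ℚ, z^2 = -3*c) := by
  set u := w.re with hu'
  set v := w.im with hv'
  have hw' : w = (u:ℂ) + (v:ℂ)*Complex.I := (Complex.re_add_im w).symm
  have hexp : ((u:ℂ) + (v:ℂ)*Complex.I)^2
      = (((u^2 - v^2 : ℝ)):ℂ) + (((2*u*v : ℝ)):ℂ)*Complex.I := by
    push_cast
    linear_combination ((v:ℂ)^2) * Complex.I_sq
  rw [hw', hexp] at h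
  obtain ⟨h1, h2⟩ := cx_split h
  have huv : u * v = 0 := by linarith
  rcases mul_eq_zero.mp huv with hu0 | hv0
  · have hvv : v^2 = ((-c : ℚ):ℝ) := by push_cast; linear_combination -h1 + u*hu0
    rcases q3_sq_rat hw.2 hvv with ⟨z, hz⟩ | ⟨z, hz⟩
    · right; left; exact ⟨z, hz⟩
    · right; right; right; exact ⟨z, by linear_combination hz⟩
  · have huu : u^2 = ((c : ℚ):ℝ) := by push_cast; linear_combination h1 + v*hv0
    rcases q3_sq_rat hw.1 huu with ⟨z, hz⟩ | ⟨z, hz⟩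
    · left; exact ⟨z, hz⟩
    · right; right; left; exact ⟨z, hz⟩

/-- linear independence of 1, T, T² over Q4 -/
theorem complex_li {p q r : ℂ} (hp : p ∈ Q4) (hq : q ∈ Q4) (hr : r ∈ Q4)
    (h : p + q * Tc + r * Tc^2 = 0) : p = 0 ∧ q = 0 ∧ r = 0 := by
  have hT2 : Tc^2 = ((tR^2 : ℝ):ℂ) := by rw [Tc]; push_cast; ring
  rw [hT2, Tc] at h
  have hre : p.re + q.re * tR + r.re * tR^2 = 0 := by
    have h' := congrArg Complex.re h
    simp only [Complex.add_re, Complex.mul_re, Complex.ofReal_re, Complex.ofReal_im,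
      Complex.zero_re, mul_zero, sub_zero] at h'
    exact h'
  have him : p.im + q.im * tR + r.im * tR^2 = 0 := by
    have h' := congrArg Complex.im h
    simp only [Complex.add_im, Complex.mul_im, Complex.ofReal_re, Complex.ofReal_im,
      Complex.zero_im, mul_zero, zero_mul, add_zero, zero_add] at h'
    exact h'
  obtain ⟨e1, e2, e3⟩ := real_li hp.1 hq.1 hr.1 hre
  obtain ⟨f1, f2, f3⟩ := real_li hp.2 hq.2 hr.2 him
  exact ⟨Complex.ext e1 f1, Complex.ext e2 f2, Complex.ext e3 f3⟩

def Q12 : Set ℂ := {z | ∃ a b c : ℂ, a ∈ Q4 ∧ b ∈ Q4 ∧ c ∈ Q4 ∧ z = a + b*Tc + c*Tc^2}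

theorem q12_of_q4 {z : ℂ} (hz : z ∈ Q4) : z ∈ Q12 :=
  ⟨z, 0, 0, hz, q4_zero, q4_zero, by ring⟩
theorem q12_rat (a : ℚ) : ((a:ℂ)) ∈ Q12 := q12_of_q4 (q4_rat a)
theorem q12_zero : (0:ℂ) ∈ Q12 := q12_of_q4 q4_zero
theorem q12_one : (1:ℂ) ∈ Q12 := by simpa using q12_rat 1
theorem q12_T : Tc ∈ Q12 := ⟨0, 1, 0, q4_zero, by simpa using q4_rat 1, q4_zero, by ring⟩
theorem q12_add {x y : ℂ} (hx : x ∈ Q12) (hy : y ∈ Q12) : x + y ∈ Q12 := by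
  obtain ⟨a, b, c, ha, hb, hc, rfl⟩ := hx
  obtain ⟨d, e, f, hd, he, hf, rfl⟩ := hy
  exact ⟨a+d, b+e, c+f, q4_add ha hd, q4_add hb he, q4_add hc hf, by ring⟩
theorem q12_neg {x : ℂ} (hx : x ∈ Q12) : -x ∈ Q12 := by
  obtain ⟨a, b, c, ha, hb, hc, rfl⟩ := hx
  exact ⟨-a, -b, -c, q4_neg ha, q4_neg hb, q4_neg hc, by ring⟩
theorem q12_mul {x y : ℂ} (hx : x ∈ Q12) (hy : y ∈ Q12) : x * y ∈ Q12 := by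
  obtain ⟨a, b, c, ha, hb, hc, rfl⟩ := hx
  obtain ⟨d, e, f, hd, he, hf, rfl⟩ := hy
  refine ⟨a*d + 2*b*f + 2*c*e, a*e + b*d + 2*c*f, a*f + b*e + c*d,
    q4_add (q4_add (q4_mul ha hd) (q4_mul (q4_mul (q4_rat 2) hb) hf))
      (q4_mul (q4_mul (q4_rat 2) hc) he),
    q4_add (q4_add (q4_mul ha he) (q4_mul hb hd)) (q4_mul (q4_mul (q4_rat 2) hc) hf),
    q4_add (q4_add (q4_mul ha hf) (q4_mul hb he)) (q4_mul hc hd), ?_⟩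
  push_cast
  linear_combination (b*f + c*e + c*f*Tc) * Tc_cube
theorem q4_sq {x : ℂ} (hx : x ∈ Q4) : x^2 ∈ Q4 := by rw [sq]; exact q4_mul hx hx
theorem q4_cube {x : ℂ} (hx : x ∈ Q4) : x^3 ∈ Q4 := by
  rw [pow_succ]; exact q4_mul (q4_sq hx) hx
theorem q4_ofNat (n : ℕ) [n.AtLeastTwo] : (OfNat.ofNat n : ℂ) ∈ Q4 := by
  have := q4_rat (OfNat.ofNat n); rwa [Rat.cast_ofNat] at this

theorem q12_inv {x : ℂ} (hx : x ∈ Q12) : x⁻¹ ∈ Q12 := by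
  by_cases hx0 : x = 0
  · rw [hx0]; simpa using q12_zero
  obtain ⟨a, b, c, ha, hb, hc, rfl⟩ := hx
  set N : ℂ := a^3 + 2*b^3 + 4*c^3 - 6*a*b*c with hN
  set M : ℂ := (a^2 - 2*b*c) + (2*c^2 - a*b)*Tc + (b^2 - a*c)*Tc^2 with hM
  have hMN : (a + b*Tc + c*Tc^2) * M = N := by
    rw [hM, hN]
    linear_combination (b^3 + 2*c^3 - 2*a*b*c + (c*b^2 - a*c^2)*Tc) * Tc_cube
  have hm1 : a^2 - 2*b*c ∈ Q4 := q4_sub (q4_sq ha) (q4_mul (q4_mul (q4_ofNat 2) hb) hc)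
  have hm2 : 2*c^2 - a*b ∈ Q4 := q4_sub (q4_mul (q4_ofNat 2) (q4_sq hc)) (q4_mul ha hb)
  have hm3 : b^2 - a*c ∈ Q4 := q4_sub (q4_sq hb) (q4_mul ha hc)
  have hMne : M ≠ 0 := by
    intro hM0
    rw [hM] at hM0
    obtain ⟨e1, e2, e3⟩ := complex_li hm1 hm2 hm3 hM0
    by_cases hc0 : c = 0
    · apply hx0
      have hb0 : b = 0 := by
        have h' : b^2 = 0 := by rw [hc0] at e3; linear_combination e3
        exact (pow_eq_zero_iff (by norm_num : 2 ≠ 0)).mp h'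
      have ha0 : a = 0 := by
        have h' : a^2 = 0 := by rw [hc0, hb0] at e1; linear_combination e1
        exact (pow_eq_zero_iff (by norm_num : 2 ≠ 0)).mp h'
      rw [ha0, hb0, hc0]; ring
    · have hb3 : b^3 = 2*c^3 := by linear_combination b*e3 - c*e2
      have hw : (b/c)^3 = 2 := by
        field_simp
        linear_combination hb3
      exact q4_cube_ne2 (q4_div hb hc) hw
  have hNne : N ≠ 0 := by rw [← hMN]; exact mul_ne_zero hx0 hMne
  have hNmem : N ∈ Q4 := by
    rw [hN]
    exact q4_sub
      (q4_add (q4_add (q4_cube ha) (q4_mul (q4_ofNat 2) (q4_cube hb)))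
        (q4_mul (q4_ofNat 4) (q4_cube hc)))
      (q4_mul (q4_mul (q4_mul (q4_ofNat 6) ha) hb) hc)
  refine ⟨(a^2 - 2*b*c)/N, (2*c^2 - a*b)/N, (b^2 - a*c)/N,
    q4_div hm1 hNmem, q4_div hm2 hNmem, q4_div hm3 hNmem, ?_⟩
  have hone : (a + b*Tc + c*Tc^2) *
      ((a^2 - 2*b*c)/N + ((2*c^2 - a*b)/N)*Tc + ((b^2 - a*c)/N)*Tc^2) = 1 := by
    rw [hM] at hMN
    field_simp
    linear_combination hMN
  exact inv_eq_of_mul_eq_one_right hone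

noncomputable def SF12 : Subfield ℂ where
  carrier := Q12
  zero_mem' := q12_zero
  one_mem' := q12_one
  add_mem' := fun h1 h2 => q12_add h1 h2
  mul_mem' := fun h1 h2 => q12_mul h1 h2
  neg_mem' := fun h => q12_neg h
  inv_mem' := fun _ h => q12_inv h

noncomputable def KQ : IntermediateField ℚ ℂ :=
  SF12.toIntermediateField (fun x => by
    show (algebraMap ℚ ℂ x) ∈ Q12
    rw [eq_ratCast]
    exact q12_rat x)

theorem mem_KQ_iff {z : ℂ} : z ∈ KQ ↔ z ∈ Q12 := Iff.rfl

-- the primitive 12th root of unity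
noncomputable def zeta : ℂ := Complex.exp (2 * (Real.pi : ℂ) * Complex.I / 12)

theorem zeta_eq : zeta = ((sq3:ℝ):ℂ)/2 + Complex.I/2 := by
  have h1 : 2 * (Real.pi : ℂ) * Complex.I / 12 = ((Real.pi/6 : ℝ):ℂ) * Complex.I := by
    push_cast; ring
  rw [zeta, h1, Complex.exp_mul_I, ← Complex.ofReal_cos, ← Complex.ofReal_sin,
    Real.cos_pi_div_six, Real.sin_pi_div_six]
  rw [sq3]
  push_cast
  ring

theorem sq3C_sq : ((sq3:ℝ):ℂ)^2 = 3 := by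
  have := sq3_sq
  exact_mod_cast congrArg (fun x : ℝ => (x:ℂ)) this

theorem zeta_cubed : zeta^3 = Complex.I := by
  rw [zeta_eq]
  linear_combination (((sq3:ℝ):ℂ)/8 + 3*Complex.I/8) * sq3C_sq
    + (3*((sq3:ℝ):ℂ)/8 + Complex.I/8) * Complex.I_sq

theorem zeta_mem_Q12 : zeta ∈ Q12 := by
  apply q12_of_q4
  rw [zeta_eq]
  constructor
  · have : (((sq3:ℝ):ℂ)/2 + Complex.I/2).re = sq3/2 := by
      simp [Complex.add_re, Complex.div_re]
    rw [this]
    exact ⟨0, 1/2, by push_cast; ring⟩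
  · have : (((sq3:ℝ):ℂ)/2 + Complex.I/2).im = 1/2 := by
      simp [Complex.add_im, Complex.div_im]
    rw [this]
    exact ⟨1/2, 0, by push_cast; ring⟩

theorem ratK (K : IntermediateField ℚ ℂ) (a : ℚ) : (a:ℂ) ∈ K := by
  have := K.algebraMap_mem a; rwa [eq_ratCast] at this

theorem sq3_ne : ((sq3:ℝ):ℂ) ≠ 0 := by
  have : (0:ℝ) < sq3 := Real.sqrt_pos.mpr (by norm_num)
  exact_mod_cast ne_of_gt this

theorem Tc_ne : Tc ≠ 0 := by
  have h : (0:ℝ) < tR := Real.rpow_pos_of_pos (by norm_num) _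
  rw [Tc]
  exact_mod_cast ne_of_gt h

/-- Let `K = ℚ(ζ₁₂, ∛2) ⊂ ℂ`. A nonzero rational `q` is:
(i) a square in `K` iff one of `q, −q, 3q, −3q` is a square in `ℚ`;
(ii) a cube in `K` iff one of `q, 2q, 4q` is a cube in `ℚ`. -/
theorem stmt_12 (K : IntermediateField ℚ ℂ)
    (hK : K = IntermediateField.adjoin ℚ
      ({Complex.exp (2 * (Real.pi : ℂ) * Complex.I / 12),
        (((2 : ℝ) ^ ((1 : ℝ) / 3) : ℝ) : ℂ)} : Set ℂ))
    (q : ℚ) (hq : q ≠ 0) :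
    ((∃ y ∈ K, y ^ 2 = (q : ℂ)) ↔
      ((∃ z : ℚ, z ^ 2 = q) ∨ (∃ z : ℚ, z ^ 2 = -q) ∨
       (∃ z : ℚ, z ^ 2 = 3 * q) ∨ (∃ z : ℚ, z ^ 2 = -3 * q))) ∧
    ((∃ y ∈ K, y ^ 3 = (q : ℂ)) ↔
      ((∃ z : ℚ, z ^ 3 = q) ∨ (∃ z : ℚ, z ^ 3 = 2 * q) ∨ (∃ z : ℚ, z ^ 3 = 4 * q))) := by
  -- memberships of the generators
  have hζK : zeta ∈ K := by
    rw [hK]; exact IntermediateField.subset_adjoin ℚ _ (Set.mem_insert _ _)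
  have hTK : Tc ∈ K := by
    rw [hK]
    exact IntermediateField.subset_adjoin ℚ _ (Set.mem_insert_of_mem _ rfl)
  have hIK : Complex.I ∈ K := by rw [← zeta_cubed]; exact pow_mem hζK 3
  have hsK : ((sq3:ℝ):ℂ) ∈ K := by
    have h2 : (2:ℂ) ∈ K := by have := ratK K 2; rwa [Rat.cast_ofNat] at this
    have heq : ((sq3:ℝ):ℂ) = 2*zeta - zeta^3 := by rw [zeta_cubed, zeta_eq]; ring
    rw [heq]; exact K.sub_mem (K.mul_mem h2 hζK) (pow_mem hζK 3)
  -- K is contained in Q12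
  have hle : ∀ y ∈ K, y ∈ Q12 := by
    intro y hy
    have hKle : K ≤ KQ := by
      rw [hK, IntermediateField.adjoin_le_iff]
      intro x hx
      simp only [Set.mem_insert_iff, Set.mem_singleton_iff] at hx
      rcases hx with rfl | rfl
      · exact zeta_mem_Q12
      · exact q12_T
    exact hKle hy
  constructor
  · -- squares
    constructor
    · rintro ⟨y, hyK, hy2⟩
      obtain ⟨a, b, c, ha, hb, hc, rfl⟩ := hle y hyK
      have heq : (a^2 + 4*b*c - (q:ℂ)) + (2*a*b + 2*c^2)*Tc + (b^2 + 2*a*c)*Tc^2 = 0 := by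
        linear_combination hy2 - (2*b*c + c^2*Tc) * Tc_cube
      have hA : a^2 + 4*b*c - ((q:ℚ):ℂ) ∈ Q4 :=
        q4_sub (q4_add (q4_sq ha) (q4_mul (q4_mul (q4_ofNat 4) hb) hc)) (q4_rat q)
      have hB : 2*a*b + 2*c^2 ∈ Q4 :=
        q4_add (q4_mul (q4_mul (q4_ofNat 2) ha) hb) (q4_mul (q4_ofNat 2) (q4_sq hc))
      have hC : b^2 + 2*a*c ∈ Q4 :=
        q4_add (q4_sq hb) (q4_mul (q4_mul (q4_ofNat 2) ha) hc)
      obtain ⟨e1, e2, e3⟩ := complex_li hA hB hC heq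
      by_cases hc0 : c = 0
      · have hb0 : b = 0 := by
          have h' : b^2 = 0 := by rw [hc0] at e3; linear_combination e3
          exact (pow_eq_zero_iff (by norm_num : 2 ≠ 0)).mp h'
        have ha2 : a^2 = ((q:ℚ):ℂ) := by
          rw [hc0, hb0] at e1; linear_combination e1
        exact q4_sq_rat ha ha2
      · exfalso
        have ha0 : a ≠ 0 := by
          intro ha0; apply hc0
          have h' : c^2 = 0 := by rw [ha0] at e2; linear_combination e2/2
          exact (pow_eq_zero_iff (by norm_num : 2 ≠ 0)).mp h'
        have hkey : c*(c^3 + 2*a^3) = 0 := by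
          linear_combination ((c^2 - a*b)/2) * e2 + a^2 * e3
        have hc3 : c^3 = -(2*a^3) := by
          rcases mul_eq_zero.mp hkey with h' | h'
          · exact absurd h' hc0
          · linear_combination h'
        have hw : (-(c/a))^3 = 2 := by
          field_simp
          linear_combination -hc3
        exact q4_cube_ne2 (q4_neg (q4_div hc ha)) hw
    · rintro (⟨z, hz⟩ | ⟨z, hz⟩ | ⟨z, hz⟩ | ⟨z, hz⟩)
      · exact ⟨(z:ℂ), ratK K z, by exact_mod_cast hz⟩
      · refine ⟨(z:ℂ)*Complex.I, K.mul_mem (ratK K z) hIK, ?_⟩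
        have hzC : (z:ℂ)^2 = -(q:ℂ) := by exact_mod_cast hz
        linear_combination (z:ℂ)^2 * Complex.I_sq - hzC
      · refine ⟨(z:ℂ)/((sq3:ℝ):ℂ), K.div_mem (ratK K z) hsK, ?_⟩
        have hzC : (z:ℂ)^2 = 3*(q:ℂ) := by exact_mod_cast hz
        rw [div_pow, div_eq_iff (pow_ne_zero 2 sq3_ne)]
        linear_combination hzC - (q:ℂ) * sq3C_sq
      · refine ⟨(z:ℂ)*Complex.I/((sq3:ℝ):ℂ), K.div_mem (K.mul_mem (ratK K z) hIK) hsK, ?_⟩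
        have hzC : (z:ℂ)^2 = -3*(q:ℂ) := by exact_mod_cast hz
        rw [div_pow, div_eq_iff (pow_ne_zero 2 sq3_ne)]
        linear_combination (z:ℂ)^2 * Complex.I_sq - hzC - (q:ℂ) * sq3C_sq
  · -- cubes
    constructor
    · rintro ⟨y, hyK, hy3⟩
      obtain ⟨a, b, c, ha, hb, hc, rfl⟩ := hle y hyK
      have heq : (a^3 + 2*b^3 + 4*c^3 + 12*a*b*c - (q:ℂ))
          + (3*a^2*b + 6*a*c^2 + 6*b^2*c)*Tc
          + (3*a^2*c + 3*a*b^2 + 6*b*c^2)*Tc^2 = 0 := by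
        linear_combination hy3 -
          (b^3 + 6*a*b*c + (3*b^2*c + 3*a*c^2)*Tc + 3*b*c^2*Tc^2 + c^3*(Tc^3 + 2)) * Tc_cube
      have hA : a^3 + 2*b^3 + 4*c^3 + 12*a*b*c - ((q:ℚ):ℂ) ∈ Q4 :=
        q4_sub (q4_add (q4_add (q4_add (q4_cube ha) (q4_mul (q4_ofNat 2) (q4_cube hb)))
          (q4_mul (q4_ofNat 4) (q4_cube hc)))
          (q4_mul (q4_mul (q4_mul (q4_ofNat 12) ha) hb) hc)) (q4_rat q)
      have hB : 3*a^2*b + 6*a*c^2 + 6*b^2*c ∈ Q4 :=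
        q4_add (q4_add (q4_mul (q4_mul (q4_ofNat 3) (q4_sq ha)) hb)
          (q4_mul (q4_mul (q4_ofNat 6) ha) (q4_sq hc)))
          (q4_mul (q4_mul (q4_ofNat 6) (q4_sq hb)) hc)
      have hC : 3*a^2*c + 3*a*b^2 + 6*b*c^2 ∈ Q4 :=
        q4_add (q4_add (q4_mul (q4_mul (q4_ofNat 3) (q4_sq ha)) hc)
          (q4_mul (q4_mul (q4_ofNat 3) ha) (q4_sq hb)))
          (q4_mul (q4_mul (q4_ofNat 6) hb) (q4_sq hc))
      obtain ⟨e1, e2, e3⟩ := complex_li hA hB hC heq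
      by_cases ha0 : a = 0
      · have hbc : b^2*c = 0 := by rw [ha0] at e2; linear_combination e2/6
        rcases mul_eq_zero.mp hbc with h' | hcc
        · have hb0 : b = 0 := (pow_eq_zero_iff (by norm_num : 2 ≠ 0)).mp h'
          have hc3 : c^3 = ((q/4 : ℚ):ℂ) := by
            rw [ha0, hb0] at e1; push_cast; linear_combination e1/4
          obtain ⟨z, hz⟩ := q4_cube_rat hc hc3
          exact Or.inr (Or.inl ⟨2*z, by linear_combination 8*hz⟩)
        · have hb3 : b^3 = ((q/2 : ℚ):ℂ) := by
            rw [ha0, hcc] at e1; push_cast; linear_combination e1/2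
          obtain ⟨z, hz⟩ := q4_cube_rat hb hb3
          exact Or.inr (Or.inr ⟨2*z, by linear_combination 8*hz⟩)
      · have hkey : a*(2*c^3 - b^3) = 0 := by linear_combination (c*e2 - b*e3)/3
        have h2c : 2*c^3 = b^3 := by
          rcases mul_eq_zero.mp hkey with h' | h'
          · exact absurd h' ha0
          · linear_combination h'
        by_cases hc0 : c = 0
        · have hb0 : b = 0 := by
            have h' : b^3 = 0 := by rw [hc0] at h2c; linear_combination -h2c
            exact (pow_eq_zero_iff (by norm_num : 3 ≠ 0)).mp h'
          have ha3 : a^3 = ((q:ℚ):ℂ) := by rw [hb0, hc0] at e1; linear_combination e1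
          obtain ⟨z, hz⟩ := q4_cube_rat ha ha3
          exact Or.inl ⟨z, hz⟩
        · exfalso
          have hw : (b/c)^3 = 2 := by field_simp; linear_combination -h2c
          exact q4_cube_ne2 (q4_div hb hc) hw
    · rintro (⟨z, hz⟩ | ⟨z, hz⟩ | ⟨z, hz⟩)
      · exact ⟨(z:ℂ), ratK K z, by exact_mod_cast hz⟩
      · refine ⟨(z:ℂ)/Tc, K.div_mem (ratK K z) hTK, ?_⟩
        have hzC : (z:ℂ)^3 = 2*(q:ℂ) := by exact_mod_cast hz
        rw [div_pow, div_eq_iff (pow_ne_zero 3 Tc_ne), Tc_cube]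
        linear_combination hzC
      · refine ⟨(z:ℂ)/Tc^2, K.div_mem (ratK K z) (pow_mem hTK 2), ?_⟩
        have hzC : (z:ℂ)^3 = 4*(q:ℂ) := by exact_mod_cast hz
        have hT6 : (Tc^2)^3 = 4 := by
          have h' : (Tc^2)^3 = (Tc^3)^2 := by ring
          rw [h', Tc_cube]; norm_num
        rw [div_pow, div_eq_iff (pow_ne_zero 3 (pow_ne_zero 2 Tc_ne)), hT6]
        linear_combination hzC
end

section
/- Let α be an integer, let d be a positive integer, and let d₁, …, dₙ be positive integers. For every ε > 0 there exists a constant C (depending on α, d, the dᵢ and ε) such that for all real T ≥ 1, the number of tuples (a₁, …, aₙ) ∈ ℤⁿ with 0 < |aᵢ| ≤ T for all i and with α·a₁^{d₁}⋯aₙ^{dₙ} equal to bᵈ for some nonzero rational number b, is at most C · T^{(d₁ + ⋯ + dₙ)/d + ε}. -/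
open Finset in
lemma divisor_bound (ε : ℝ) (hε : 0 < ε) :
    ∃ C : ℝ, 1 ≤ C ∧ ∀ m : ℕ, m ≠ 0 → (m.divisors.card : ℝ) ≤ C * (m : ℝ) ^ ε := by
  have h2 : (1:ℝ) < (2:ℝ) ^ ε := Real.one_lt_rpow_iff_of_pos (by norm_num) |>.2 (Or.inl ⟨by norm_num, hε⟩)
  set δ : ℝ := (2:ℝ) ^ ε - 1 with hδdef
  have hδ : 0 < δ := by simp [hδdef]; linarith
  set C₀ : ℝ := max 1 (1/δ) with hC₀def
  have hC₀1 : 1 ≤ C₀ := le_max_left _ _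
  set N : ℕ := ⌈(2:ℝ) ^ (1/ε)⌉₊ with hNdef
  refine ⟨C₀ ^ (N+1), one_le_pow₀ hC₀1, fun m hm => ?_⟩
  -- per prime factor bound
  have key : ∀ p ∈ m.primeFactors,
      ((m.factorization p + 1 : ℕ) : ℝ) ≤
        (if p ≤ N then C₀ else 1) * (((p ^ m.factorization p : ℕ) : ℝ)) ^ ε := by
    intro p hp
    have hpp : p.Prime := Nat.prime_of_mem_primeFactors hp
    have hp2 : (2:ℝ) ≤ (p:ℝ) := by exact_mod_cast hpp.two_le
    set e : ℕ := m.factorization p with hedef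
    have hrw : (((p ^ e : ℕ) : ℝ)) ^ ε = ((p:ℝ) ^ ε) ^ e := by
      push_cast
      rw [← Real.rpow_natCast ((p:ℝ)^ε) e, ← Real.rpow_natCast (p:ℝ) e,
        ← Real.rpow_mul (by positivity), ← Real.rpow_mul (by positivity), mul_comm]
    rw [hrw]
    by_cases hpN : p ≤ N
    · simp only [hpN, if_true]
      have h2' : (e + 1 : ℝ) ≤ C₀ * ((2:ℝ) ^ ε) ^ e := by
        have hber : 1 + (e:ℝ) * δ ≤ (1 + δ) ^ e := one_add_mul_le_pow (by linarith) e
        have : (1:ℝ) + δ = (2:ℝ) ^ ε := by simp [hδdef]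
        rw [← this]
        have hC₀δ : 1 ≤ C₀ * δ := by
          have : 1/δ ≤ C₀ := le_max_right _ _
          calc (1:ℝ) = (1/δ) * δ := by field_simp
          _ ≤ C₀ * δ := by gcongr
        calc ((e:ℝ) + 1) ≤ C₀ * (1 + (e:ℝ) * δ) := by nlinarith [Nat.cast_nonneg (α := ℝ) e]
        _ ≤ C₀ * (1 + δ) ^ e := by gcongr
      push_cast
      calc ((e:ℝ) + 1) ≤ C₀ * ((2:ℝ) ^ ε) ^ e := h2'
      _ ≤ C₀ * ((p:ℝ) ^ ε) ^ e := by
            have := Real.rpow_le_rpow (x := (2:ℝ)) (by norm_num) hp2 hε.le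
            gcongr
    · simp only [hpN, if_false, one_mul]
      -- p > N so p ≥ 2^{1/ε}, hence p^ε ≥ 2
      have hpN' : (2:ℝ) ^ (1/ε) ≤ (p:ℝ) := by
        have : (N:ℝ) < p := by exact_mod_cast Nat.lt_of_not_le hpN
        calc (2:ℝ) ^ (1/ε) ≤ (N:ℝ) := Nat.le_ceil _
        _ ≤ (p:ℝ) := this.le
      have hp2e : (2:ℝ) ≤ (p:ℝ) ^ ε := by
        calc (2:ℝ) = ((2:ℝ) ^ (1/ε)) ^ ε := by
              rw [← Real.rpow_mul (by norm_num), one_div, inv_mul_cancel₀ hε.ne', Real.rpow_one]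
        _ ≤ (p:ℝ) ^ ε := Real.rpow_le_rpow (by positivity) hpN' hε.le
      have h2e : (e + 1 : ℕ) ≤ 2 ^ e := Nat.lt_two_pow_self (n := e)
      push_cast
      calc ((e:ℝ) + 1) ≤ (2:ℝ) ^ e := by exact_mod_cast h2e
      _ ≤ ((p:ℝ) ^ ε) ^ e := by gcongr
  have hprod_m : (∏ p ∈ m.primeFactors, ((p ^ m.factorization p : ℕ) : ℝ)) = (m:ℝ) := by
    have h := Nat.factorization_prod_pow_eq_self hm
    rw [Finsupp.prod, Nat.support_factorization] at h
    exact_mod_cast congrArg (Nat.cast : ℕ → ℝ) h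
  calc (m.divisors.card : ℝ)
      = ∏ p ∈ m.primeFactors, ((m.factorization p + 1 : ℕ) : ℝ) := by
        rw [Nat.card_divisors hm]; push_cast; rfl
    _ ≤ ∏ p ∈ m.primeFactors,
          ((if p ≤ N then C₀ else 1) * ((p ^ m.factorization p : ℕ) : ℝ) ^ ε) :=
        Finset.prod_le_prod (fun p _ => by positivity) key
    _ = (∏ p ∈ m.primeFactors, (if p ≤ N then C₀ else 1)) *
        ∏ p ∈ m.primeFactors, ((p ^ m.factorization p : ℕ) : ℝ) ^ ε := by
        rw [Finset.prod_mul_distrib]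
    _ ≤ C₀ ^ (N + 1) * (m : ℝ) ^ ε := by
        have hB : (∏ p ∈ m.primeFactors, ((p ^ m.factorization p : ℕ) : ℝ) ^ ε)
            = (m : ℝ) ^ ε := by
          rw [Real.finset_prod_rpow _ _ (fun p _ => by positivity), hprod_m]
        rw [hB]
        have hA : (∏ p ∈ m.primeFactors, (if p ≤ N then C₀ else 1)) ≤ C₀ ^ (N + 1) := by
          rw [Finset.prod_ite, Finset.prod_const, Finset.prod_const, one_pow, mul_one]
          have hcard : (m.primeFactors.filter (· ≤ N)).card ≤ N + 1 := by
            calc (m.primeFactors.filter (· ≤ N)).card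
                ≤ (Finset.Iic N).card := Finset.card_le_card (fun p hp => by
                  simp only [Finset.mem_filter] at hp
                  exact Finset.mem_Iic.mpr hp.2)
              _ = N + 1 := Nat.card_Iic N
          exact pow_le_pow_right₀ hC₀1 hcard
        gcongr


/-- Let `α ∈ ℤ`, `d ≥ 1` and `d₁, …, dₙ ≥ 1`. For every `ε > 0` there is a
constant `C` such that for all `T ≥ 1`, the number of tuples `(a₁, …, aₙ) ∈ ℤⁿ`
with `0 < |aᵢ| ≤ T` and `α·a₁^{d₁}⋯aₙ^{dₙ}` a nonzero `d`-th power in `ℚ` is at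
most `C · T^{(d₁+⋯+dₙ)/d + ε}`. -/
theorem stmt_13 (n : ℕ) (α : ℤ) (d : ℕ) (hd : 0 < d) (ds : Fin n → ℕ)
    (hds : ∀ i, 0 < ds i) (ε : ℝ) (hε : 0 < ε) :
    ∃ C : ℝ, 0 < C ∧ ∀ T : ℝ, 1 ≤ T →
      (Nat.card {a : Fin n → ℤ // (∀ i, a i ≠ 0 ∧ (|a i| : ℝ) ≤ T) ∧
          ∃ b : ℚ, b ≠ 0 ∧ (α : ℚ) * ∏ i, (a i : ℚ) ^ (ds i) = b ^ d} : ℝ)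
        ≤ C * T ^ ((∑ i, (ds i : ℝ)) / (d : ℝ) + ε) := by
  classical
  rcases eq_or_ne α 0 with hα | hα
  · refine ⟨1, one_pos, fun T hT => ?_⟩
    have hT0 : (0:ℝ) < T := by linarith
    have hemp : IsEmpty {a : Fin n → ℤ // (∀ i, a i ≠ 0 ∧ (|a i| : ℝ) ≤ T) ∧
        ∃ b : ℚ, b ≠ 0 ∧ (α : ℚ) * ∏ i, (a i : ℚ) ^ (ds i) = b ^ d} := by
      constructor
      rintro ⟨a, -, b, hb, hEq⟩
      apply hb
      have : b ^ d = 0 := by rw [← hEq, hα]; push_cast; ring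
      exact pow_eq_zero_iff hd.ne' |>.mp this
    rw [Nat.card_of_isEmpty]
    simp only [Nat.cast_zero]
    positivity
  -- main case
  set D : ℕ := ∑ i, ds i with hD
  set ε' : ℝ := ε / (D * n + 1) with hε'def
  have hDn : (0:ℝ) < (D:ℝ) * n + 1 := by positivity
  have hε' : 0 < ε' := by positivity
  obtain ⟨Cτ, hCτ1, hCτ⟩ := divisor_bound ε' hε'
  set A : ℝ := |(α:ℝ)| with hAdef
  have hA1 : (1:ℝ) ≤ A := by
    rw [hAdef, ← Int.cast_abs]
    exact_mod_cast Int.one_le_abs hα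
  refine ⟨(2*A+3) * (2*Cτ)^n, by positivity, fun T hT => ?_⟩
  have hT0 : (0:ℝ) < T := by linarith
  set M : ℕ := ⌊T⌋₊ with hM
  have hM1 : 1 ≤ M := (Nat.one_le_floor_iff T).mpr hT
  have hMT : (M:ℝ) ≤ T := Nat.floor_le hT0.le
  have habs : ∀ z : ℤ, |((z:ℤ):ℝ)| ≤ T ↔ |z| ≤ (M:ℤ) := by
    intro z
    rw [← Int.cast_abs]
    constructor
    · intro h
      have : |z| ≤ ⌊T⌋ := Int.le_floor.mpr h
      rwa [← Int.natCast_floor_eq_floor hT0.le] at this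
    · intro h
      calc ((|z|:ℤ):ℝ) ≤ ((M:ℤ):ℝ) := by exact_mod_cast h
        _ = (M:ℝ) := by push_cast; rfl
        _ ≤ T := hMT
  set P : (Fin n → ℤ) → Prop := fun a => (∀ i, a i ≠ 0 ∧ |((a i : ℤ):ℝ)| ≤ T) ∧
      ∃ b : ℚ, b ≠ 0 ∧ (α : ℚ) * ∏ i, (a i : ℚ) ^ (ds i) = b ^ d with hP
  set box : Finset (Fin n → ℤ) := Fintype.piFinset fun _ => Finset.Icc (-(M:ℤ)) (M:ℤ) with hbox
  set F : Finset (Fin n → ℤ) := box.filter P with hF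
  have hmemF : ∀ a, a ∈ F ↔ P a := by
    intro a
    rw [hF, Finset.mem_filter]
    constructor
    · exact fun h => h.2
    · intro h
      refine ⟨?_, h⟩
      rw [hbox, Fintype.mem_piFinset]
      intro i
      rw [Finset.mem_Icc, ← abs_le]
      exact (habs (a i)).mp (h.1 i).2
  have hcard : (Nat.card {a : Fin n → ℤ // P a} : ℝ) = (F.card : ℝ) := by
    have hset : {a : Fin n → ℤ | P a} = ↑F := Set.ext fun a => by
      rw [Finset.mem_coe, hmemF]; rfl
    have h1 : Nat.card {a : Fin n → ℤ // P a} = Set.ncard {a : Fin n → ℤ | P a} :=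
      Nat.card_coe_set_eq _
    rw [h1, hset, Set.ncard_coe_finset]
  set g : (Fin n → ℤ) → ℤ := fun a => α * ∏ i, (a i)^(ds i) with hg
  have hprodT : ∀ a : Fin n → ℤ, (∀ i, |((a i : ℤ):ℝ)| ≤ T) →
      |((∏ i, (a i)^(ds i) : ℤ):ℝ)| ≤ T^(D:ℕ) := by
    intro a ha
    have : ((∏ i, (a i)^(ds i) : ℤ):ℝ) = ∏ i, ((a i : ℤ):ℝ)^(ds i) := by push_cast; rfl
    rw [this, Finset.abs_prod]
    calc ∏ i, |((a i : ℤ):ℝ)^(ds i)| = ∏ i, |((a i : ℤ):ℝ)|^(ds i) := by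
          simp [abs_pow]
      _ ≤ ∏ i : Fin n, T^(ds i) := Finset.prod_le_prod (fun i _ => by positivity)
          (fun i _ => pow_le_pow_left₀ (abs_nonneg _) (ha i) _)
      _ = T^(D:ℕ) := by rw [hD, Finset.prod_pow_eq_pow_sum]
  set K : ℕ := ⌈(A * T^(D:ℕ))^((d:ℝ)⁻¹)⌉₊ with hK
  set t : Finset ℤ := (Finset.Icc (-(K:ℤ)) (K:ℤ)).image (· ^ d) with ht
  have maps_to : ∀ a ∈ F, g a ∈ t := by
    intro a haF
    obtain ⟨ha, b, hb, hEq⟩ := (hmemF a).mp haF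
    -- b is an integer
    have hgq : (b : ℚ) ^ d = ((g a : ℤ) : ℚ) := by
      rw [← hEq, hg]; push_cast; ring
    have hden : b.den = 1 := by
      have h1 : b.den ^ d = 1 := by
        have := congrArg Rat.den hgq
        rwa [Rat.den_pow, Rat.den_intCast] at this
      by_contra hne
      have hpos := b.pos
      have := Nat.one_lt_pow hd.ne' (show 1 < b.den by omega)
      omega
    set k : ℤ := b.num with hk
    have hbk : (k : ℚ) = b := Rat.coe_int_num_of_den_eq_one hden
    have hkd : k ^ d = g a := by
      have : ((k ^ d : ℤ) : ℚ) = ((g a : ℤ) : ℚ) := by push_cast [hbk]; exact hgq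
      exact_mod_cast this
    have hkK : |k| ≤ (K : ℤ) := by
      have h2 : |((k : ℤ):ℝ)| ^ d ≤ A * T^(D:ℕ) := by
        have h4 : ((k:ℤ):ℝ) ^ d = (α:ℝ) * ((∏ i, (a i)^(ds i) : ℤ):ℝ) := by
          have := congrArg (fun z : ℤ => (z:ℝ)) hkd
          simp only [hg] at this
          push_cast at this ⊢
          exact this
        rw [← abs_pow, h4, abs_mul, ← hAdef]
        have h6 := hprodT a (fun i => (ha i).2)
        have h7 : (0:ℝ) < A := by linarith
        exact mul_le_mul_of_nonneg_left h6 h7.le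
      have h4 : |((k : ℤ):ℝ)| ≤ (A * T^(D:ℕ))^((d:ℝ)⁻¹) := by
        rw [← Real.pow_rpow_inv_natCast (abs_nonneg ((k:ℤ):ℝ)) hd.ne']
        exact Real.rpow_le_rpow (by positivity) h2 (by positivity)
      have h5 : |((k : ℤ):ℝ)| ≤ (K : ℝ) := h4.trans (Nat.le_ceil _)
      rw [← Int.cast_abs] at h5
      exact_mod_cast h5
    rw [ht]
    refine Finset.mem_image.mpr ⟨k, Finset.mem_Icc.mpr ?_, hkd⟩
    rw [← abs_le]; exact hkK
  set fib : ℝ := (2 * (Cτ * T^((D:ℝ)*ε')))^n with hfib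
  have fiber : ∀ v ∈ t, ((F.filter (fun a => g a = v)).card : ℝ) ≤ fib := by
    intro v _
    have hfib0' : (0:ℝ) ≤ fib := by rw [hfib]; positivity
    rcases Finset.eq_empty_or_nonempty (F.filter (fun a => g a = v)) with he | ⟨a₀, ha₀⟩
    · rw [he]; simpa using hfib0'
    obtain ⟨ha₀F, ha₀v⟩ := Finset.mem_filter.mp ha₀
    obtain ⟨ha₀P, -⟩ := (hmemF a₀).mp ha₀F
    set m : ℤ := ∏ i, (a₀ i)^(ds i) with hm
    have hm0 : m ≠ 0 := by
      rw [hm]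
      exact Finset.prod_ne_zero_iff.mpr (fun i _ => pow_ne_zero _ (ha₀P i).1)
    have hmna : m.natAbs ≠ 0 := Int.natAbs_ne_zero.mpr hm0
    set sd : Finset ℤ := m.natAbs.divisors.image (fun t : ℕ => (t:ℤ)) ∪
        m.natAbs.divisors.image (fun t : ℕ => -(t:ℤ)) with hsd
    have hsub : (F.filter (fun a => g a = v)) ⊆ Fintype.piFinset (fun _ : Fin n => sd) := by
      intro a haf
      obtain ⟨haF, hav⟩ := Finset.mem_filter.mp haf
      obtain ⟨haP, -⟩ := (hmemF a).mp haF
      have hprod : (∏ i, (a i)^(ds i)) = m := by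
        have : g a = g a₀ := by rw [hav, ha₀v]
        rw [hg] at this
        exact mul_left_cancel₀ hα this
      rw [Fintype.mem_piFinset]
      intro i
      have hdvd : a i ∣ m := by
        rw [← hprod]
        exact dvd_trans (dvd_pow_self (a i) (hds i).ne')
          (Finset.dvd_prod_of_mem _ (Finset.mem_univ i))
      have hmem : (a i).natAbs ∈ m.natAbs.divisors :=
        Nat.mem_divisors.mpr ⟨Int.natAbs_dvd_natAbs.mpr hdvd, hmna⟩
      rw [hsd, Finset.mem_union]
      rcases Int.natAbs_eq (a i) with h | h
      · exact Or.inl (h ▸ Finset.mem_image_of_mem (fun t : ℕ => (t:ℤ)) hmem)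
      · exact Or.inr (h ▸ Finset.mem_image_of_mem (fun t : ℕ => -(t:ℤ)) hmem)
    have hsdcard : (sd.card : ℝ) ≤ 2 * (Cτ * T^((D:ℝ)*ε')) := by
      have h1 : sd.card ≤ 2 * m.natAbs.divisors.card := by
        rw [hsd]
        refine (Finset.card_union_le _ _).trans ?_
        have i1 := Finset.card_image_le (s := m.natAbs.divisors) (f := fun t : ℕ => (t:ℤ))
        have i2 := Finset.card_image_le (s := m.natAbs.divisors) (f := fun t : ℕ => -(t:ℤ))
        omega
      have h2 : (m.natAbs.divisors.card : ℝ) ≤ Cτ * T^((D:ℝ)*ε') := by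
        have h3 : ((m.natAbs : ℕ) : ℝ) ≤ T^(D:ℕ) := by
          have := hprodT a₀ (fun i => (ha₀P i).2)
          rw [← hm] at this
          calc ((m.natAbs : ℕ) : ℝ) = |((m : ℤ):ℝ)| := by rw [Nat.cast_natAbs]; push_cast; rfl
            _ ≤ T^(D:ℕ) := this
        calc (m.natAbs.divisors.card : ℝ) ≤ Cτ * ((m.natAbs : ℕ) : ℝ)^ε' := hCτ _ hmna
          _ ≤ Cτ * (T^(D:ℕ))^ε' := by
              have := Real.rpow_le_rpow (x := ((m.natAbs : ℕ) : ℝ)) (by positivity) h3 hε'.le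
              have hc0 : (0:ℝ) < Cτ := by linarith
              exact mul_le_mul_of_nonneg_left this hc0.le
          _ = Cτ * T^((D:ℝ)*ε') := by
              rw [← Real.rpow_natCast T D, ← Real.rpow_mul hT0.le]
      calc (sd.card : ℝ) ≤ (2 * m.natAbs.divisors.card : ℕ) := by exact_mod_cast h1
        _ = 2 * (m.natAbs.divisors.card : ℝ) := by push_cast; ring
        _ ≤ 2 * (Cτ * T^((D:ℝ)*ε')) := by linarith
    calc ((F.filter (fun a => g a = v)).card : ℝ)
        ≤ ((Fintype.piFinset (fun _ : Fin n => sd)).card : ℝ) := by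
          exact_mod_cast Finset.card_le_card hsub
      _ = ((sd.card : ℝ))^n := by
          rw [Fintype.card_piFinset]
          push_cast
          rw [Finset.prod_const, Finset.card_univ, Fintype.card_fin]
      _ ≤ (2 * (Cτ * T^((D:ℝ)*ε')))^n := pow_le_pow_left₀ (Nat.cast_nonneg _) hsdcard n
      _ = fib := by rw [hfib]
  have tcard : (t.card : ℝ) ≤ (2*A+3) * T^((D:ℝ)/(d:ℝ)) := by
    have h1 : t.card ≤ 2*K + 1 := by
      calc t.card ≤ (Finset.Icc (-(K:ℤ)) (K:ℤ)).card := Finset.card_image_le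
        _ = 2*K + 1 := by
          rw [Int.card_Icc]
          simp only [sub_neg_eq_add]
          norm_num
          omega
    have hK1 : (K : ℝ) ≤ A * T^((D:ℝ)/(d:ℝ)) + 1 := by
      have h2 : (A * T^(D:ℕ))^((d:ℝ)⁻¹) ≤ A * T^((D:ℝ)/(d:ℝ)) := by
        rw [Real.mul_rpow (by positivity) (by positivity)]
        have hA' : A^((d:ℝ)⁻¹) ≤ A := by
          calc A^((d:ℝ)⁻¹) ≤ A^(1:ℝ) := Real.rpow_le_rpow_of_exponent_le hA1 (by
              rw [inv_le_one_iff₀]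
              right
              exact_mod_cast hd)
            _ = A := Real.rpow_one A
        have hT' : (T^(D:ℕ))^((d:ℝ)⁻¹) = T^((D:ℝ)/(d:ℝ)) := by
          rw [← Real.rpow_natCast T D, ← Real.rpow_mul hT0.le, div_eq_mul_inv]
        rw [hT']
        gcongr
      calc (K : ℝ) ≤ (A * T^(D:ℕ))^((d:ℝ)⁻¹) + 1 := by
            rw [hK]
            exact (Nat.ceil_lt_add_one (by positivity)).le
        _ ≤ A * T^((D:ℝ)/(d:ℝ)) + 1 := by linarith
    have hTD1 : (1:ℝ) ≤ T^((D:ℝ)/(d:ℝ)) := by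
      calc (1:ℝ) = T^(0:ℝ) := (Real.rpow_zero T).symm
        _ ≤ T^((D:ℝ)/(d:ℝ)) := Real.rpow_le_rpow_of_exponent_le hT (by positivity)
    calc (t.card : ℝ) ≤ ((2*K + 1 : ℕ) : ℝ) := by exact_mod_cast h1
      _ = 2*(K:ℝ) + 1 := by push_cast; ring
      _ ≤ 2*(A * T^((D:ℝ)/(d:ℝ)) + 1) + 1 := by linarith
      _ ≤ (2*A+3) * T^((D:ℝ)/(d:ℝ)) := by nlinarith
  have hsum : (Nat.card {a : Fin n → ℤ // P a} : ℝ) ≤ (t.card : ℝ) * fib := by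
    rw [hcard, Finset.card_eq_sum_card_fiberwise maps_to]
    push_cast
    calc (∑ v ∈ t, ((F.filter (fun a => g a = v)).card : ℝ))
        ≤ ∑ v ∈ t, fib := Finset.sum_le_sum fiber
      _ = (t.card : ℝ) * fib := by rw [Finset.sum_const, nsmul_eq_mul]
  have hfib0 : 0 ≤ fib := by rw [hfib]; positivity
  have hfinal : (t.card : ℝ) * fib ≤ (2*A+3) * (2*Cτ)^n * T ^ ((D:ℝ)/(d:ℝ) + ε) := by
    have hpow : (T ^ ((D:ℝ)*ε')) ^ n = T ^ ((D:ℝ)*ε'*(n:ℝ)) := by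
      rw [← Real.rpow_natCast (T ^ ((D:ℝ)*ε')) n, ← Real.rpow_mul hT0.le]
    have hεbound : (D:ℝ)*ε'*(n:ℝ) ≤ ε := by
      have heq : (D:ℝ)*ε'*(n:ℝ) = ε * (((D:ℝ)*(n:ℝ))/((D:ℝ)*(n:ℝ)+1)) := by
        rw [hε'def]; field_simp
      rw [heq]
      have hle1 : ((D:ℝ)*(n:ℝ))/((D:ℝ)*(n:ℝ)+1) ≤ 1 := by
        rw [div_le_one hDn]; linarith
      nlinarith
    have hmerge : T ^ ((D:ℝ)/(d:ℝ)) * T ^ ((D:ℝ)*ε'*(n:ℝ)) ≤ T ^ ((D:ℝ)/(d:ℝ) + ε) := by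
      rw [← Real.rpow_add hT0]
      exact Real.rpow_le_rpow_of_exponent_le hT (by linarith)
    calc (t.card : ℝ) * fib ≤ ((2*A+3) * T^((D:ℝ)/(d:ℝ))) * fib := by gcongr
      _ = (2*A+3) * (2*Cτ)^n * (T^((D:ℝ)/(d:ℝ)) * T^((D:ℝ)*ε'*(n:ℝ))) := by
          rw [hfib, show 2*(Cτ*T^((D:ℝ)*ε')) = (2*Cτ)*T^((D:ℝ)*ε') by ring, mul_pow, hpow]
          ring
      _ ≤ (2*A+3) * (2*Cτ)^n * T ^ ((D:ℝ)/(d:ℝ) + ε) := by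
          have h0 : (0:ℝ) ≤ (2*A+3) * (2*Cτ)^n := by positivity
          exact mul_le_mul_of_nonneg_left hmerge h0
  calc (Nat.card {a : Fin n → ℤ // P a} : ℝ) ≤ (t.card : ℝ) * fib := hsum
    _ ≤ (2*A+3) * (2*Cτ)^n * T ^ ((D:ℝ)/(d:ℝ) + ε) := hfinal
    _ = (2*A+3) * (2*Cτ)^n * T ^ ((∑ i, (ds i : ℝ)) / (d:ℝ) + ε) := by
        rw [hD]; push_cast; ring_nf
end

section
/- Let G be a finite solvable group and let M be an abelian group equipped with an action of G by group automorphisms. Let G act on Hom(M, ℚ/ℤ) by (g·φ)(m) = φ(g⁻¹·m). Then the restriction map Hom(M, ℚ/ℤ) → Hom(M^G, ℚ/ℤ) is surjective, and its kernel is exactly the subgroup generated by all elements g·φ − φ with g ∈ G and φ ∈ Hom(M, ℚ/ℤ). In other words, the natural map from the coinvariants Hom(M, ℚ/ℤ)_G to Hom(M^G, ℚ/ℤ), sending the class of φ to φ restricted to M^G, is an isomorphism of abelian groups. -/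
/-- The subgroup of `G`-fixed points of an additive `G`-module `M`. -/
def fixedAddSubgroup (G M : Type*) [Group G] [AddCommGroup M]
    [DistribMulAction G M] : AddSubgroup M where
  carrier := {m : M | ∀ g : G, g • m = m}
  zero_mem' := fun g => smul_zero g
  add_mem' := fun {a b} ha hb g => by rw [smul_add, ha g, hb g]
  neg_mem' := fun {a} ha g => by rw [smul_neg, ha g]

namespace Stmt14Aux

noncomputable section

abbrev Q := ℚ ⧸ AddSubgroup.zmultiples (1 : ℚ)

instance : DivisibleBy ℚ ℕ := AddGroup.divisibleByNatOfDivisibleByInt _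
instance : DivisibleBy Q ℕ := QuotientAddGroup.divisibleBy _
instance : DivisibleBy Q ℤ := AddGroup.divisibleByIntOfDivisibleByNat _

lemma injQ : Module.Injective ℤ Q := (Module.Baer.of_divisible Q).injective

/-- Extension of homomorphisms into `ℚ/ℤ` along injective maps. -/
lemma extend {M N : Type*} [AddCommGroup M] [AddCommGroup N] (i : M →+ N)
    (hi : Function.Injective i) (f : M →+ Q) :
    ∃ g : N →+ Q, ∀ m : M, g (i m) = f m := by
  obtain ⟨h, hh⟩ := @Module.Injective.extension_property ℤ _ _ Q _ _ injQ
    M _ _ N _ _ i.toIntLinearMap hi f.toIntLinearMap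
  exact ⟨h.toAddMonoidHom, fun m => congrArg (fun k => k m) hh⟩

end

end Stmt14Aux

open Stmt14Aux in
/-- Let `G` be a finite solvable group acting on an abelian group `M`, and let
`Q = ℚ/ℤ`. The restriction map `Hom(M, Q) → Hom(M^G, Q)` is surjective, and its
kernel is exactly the subgroup generated by the elements `g·φ − φ` (where
`(g·φ)(m) = φ(g⁻¹·m)`); i.e. the coinvariants `Hom(M, Q)_G` map isomorphically
onto `Hom(M^G, Q)`. -/
theorem stmt_14 (G : Type*) [Group G] [Finite G] [Group.IsSolvable G]
    (M : Type*) [AddCommGroup M] [DistribMulAction G M]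
    (res : (M →+ ℚ ⧸ AddSubgroup.zmultiples (1 : ℚ)) →+
      (fixedAddSubgroup G M →+ ℚ ⧸ AddSubgroup.zmultiples (1 : ℚ)))
    (hres : ∀ φ, ∀ m : fixedAddSubgroup G M, res φ m = φ (m : M)) :
    Function.Surjective res ∧
    ∀ φ : M →+ ℚ ⧸ AddSubgroup.zmultiples (1 : ℚ),
      (res φ = 0 ↔
        φ ∈ AddSubgroup.closure
          {x : M →+ ℚ ⧸ AddSubgroup.zmultiples (1 : ℚ) |
            ∃ (g : G) (ψ : M →+ ℚ ⧸ AddSubgroup.zmultiples (1 : ℚ)),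
              x = ψ.comp (DistribMulAction.toAddMonoidHom M g⁻¹) - ψ}) := by
  classical
  have := Fintype.ofFinite G
  constructor
  · -- surjectivity: extend along the inclusion of the fixed subgroup
    intro f
    obtain ⟨φ, hφ⟩ := extend (fixedAddSubgroup G M).subtype (fun a b h => Subtype.ext h) f
    refine ⟨φ, ?_⟩
    ext m
    rw [hres φ m]
    exact hφ m
  · intro φ
    constructor
    · -- hard direction
      intro hφ0
      have hfix : ∀ m : M, (∀ g : G, g • m = m) → φ m = 0 := by
        intro m hm
        have := hres φ ⟨m, hm⟩
        rw [hφ0] at this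
        exact this.symm
      -- the map S : M →+ (G → M), m ↦ (g•m - m)_g
      set S : M →+ (G → M) :=
        { toFun := fun m g => g • m - m
          map_zero' := by ext g; simp
          map_add' := by intro a b; ext g; simp [smul_add]; abel } with hS
      have hker : ∀ m : M, S m = 0 → φ m = 0 := by
        intro m hm
        refine hfix m fun g => ?_
        have := congrFun hm g
        simpa [hS, sub_eq_zero] using this
      -- factor φ through the range of S
      have hsub : S.ker ≤ φ.ker := fun m hm => hker m hm
      set φbar : (M ⧸ S.ker) →+ Q :=
        QuotientAddGroup.lift S.ker φ (fun m hm => hsub hm) with hφbar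
      have hki : Function.Injective (QuotientAddGroup.kerLift S) :=
        QuotientAddGroup.kerLift_injective S
      obtain ⟨ψ, hψ⟩ := extend (QuotientAddGroup.kerLift S) hki φbar
      have hψS : ∀ m : M, ψ (S m) = φ m := by
        intro m
        have h1 : QuotientAddGroup.kerLift S (QuotientAddGroup.mk m) = S m :=
          QuotientAddGroup.kerLift_mk S m
        have := hψ (QuotientAddGroup.mk m)
        rw [h1] at this
        simpa [hφbar] using this
      -- write φ as a sum of elements of the generating set
      have key : φ = ∑ g : G,
          ((ψ.comp (AddMonoidHom.single (fun _ : G => M) g)).comp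
              (DistribMulAction.toAddMonoidHom M g)
            - ψ.comp (AddMonoidHom.single (fun _ : G => M) g)) := by
        ext m
        rw [← hψS m]
        have hsm : S m = ∑ g : G, Pi.single g (g • m - m) := by
          funext h
          rw [Finset.univ_sum_single (fun g : G => g • m - m)]
          rfl
        rw [hsm, map_sum]
        simp only [AddMonoidHom.finset_sum_apply, AddMonoidHom.sub_apply,
          AddMonoidHom.coe_comp, Function.comp_apply, AddMonoidHom.single_apply,
          DistribMulAction.toAddMonoidHom_apply]
        refine Finset.sum_congr rfl fun g _ => ?_
        rw [show (g • m - m : M) = g • m + (- m) by abel, Pi.single_add, map_add,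
          Pi.single_neg, map_neg, sub_eq_add_neg]
      rw [key]
      refine AddSubgroup.sum_mem _ fun g _ => AddSubgroup.subset_closure ?_
      exact ⟨g⁻¹, ψ.comp (AddMonoidHom.single (fun _ : G => M) g), by rw [inv_inv]⟩
    · -- easy direction
      intro hφ
      refine AddSubgroup.closure_induction ?_ (by simp) ?_ ?_ hφ
      · rintro x ⟨g, ψ, rfl⟩
        ext m
        have hm : (g⁻¹ : G) • (m : M) = m := m.2 g⁻¹
        rw [hres]
        simp [hm]
      · intro x y _ _ hx hy
        rw [map_add, hx, hy, add_zero]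
      · intro x _ hx
        rw [map_neg, hx, neg_zero]
end
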